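/- arXiv:2502.08274 — 4 statements merged into one kernel-verified Lean document; each statement's English description precedes it below -/
import Mathlib

section
/- Let P be a Poisson random variable with parameter x ≥ 0. Then for every s ≥ 0, E[(P − x)^s] = Σ_{k=0}^{s} x^k S_2(s,k), where S_2(s,k) is the number of partitions of an s-element set into k blocks each of size at least 2. -/
open MeasureTheory ProbabilityTheory Filter Real Finset

/-- Associated Stirling numbers of the second kind: the number of partitions of
an `s`-element set into exactly `k` blocks, each of size at least `2`. -/
noncomputable def assocStirling (s k : ℕ) : ℕ :=
  Nat.card {P : Finset (Finset (Fin s)) //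
    P.card = k ∧ (∀ B ∈ P, 2 ≤ B.card) ∧ ∀ x : Fin s, ∃! B, B ∈ P ∧ x ∈ B}

set_option linter.unusedSectionVars false
set_option maxHeartbeats 1000000

lemma sum1 (r : ℝ) (s : ℕ) : Summable (fun n : ℕ => (n:ℝ)^s * r^n / n.factorial) := by
  apply Summable.of_norm_bounded_eventually_nat (g := fun n => (2*|r|)^n / n.factorial)
  · exact Real.summable_pow_div_factorial _
  · have h := tendsto_pow_const_div_const_pow_of_one_lt s (by norm_num : (1:ℝ) < 2)
    filter_upwards [h.eventually_le_const (by norm_num : (0:ℝ) < 1)] with n hn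
    have h2 : (0:ℝ) < 2^n := by positivity
    have hns : (n:ℝ)^s ≤ 2^n := by
      rw [div_le_one h2] at hn; exact hn
    have : ‖(n:ℝ)^s * r^n / n.factorial‖ = (n:ℝ)^s * |r|^n / n.factorial := by
      rw [Real.norm_eq_abs, abs_div, abs_mul, abs_pow, abs_pow, Nat.abs_cast, Nat.abs_cast]
    rw [this, mul_pow]
    gcongr
lemma sum2 (x : ℝ) (hx : 0 ≤ x) (s : ℕ) :
    Summable (fun ℓ : ℕ => Real.exp (-x) * x ^ ℓ / ℓ.factorial * ((ℓ : ℝ) - x) ^ s) := by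
  apply Summable.of_norm_bounded
    (g := fun ℓ : ℕ => ∑ j ∈ range (s+1), (Real.exp (-x) * x^(s-j) * s.choose j) * ((ℓ:ℝ)^j * x^ℓ / ℓ.factorial))
  · exact summable_sum fun j _ => (sum1 x j).mul_left _
  · intro ℓ
    have h1 : ‖Real.exp (-x) * x ^ ℓ / ℓ.factorial * ((ℓ : ℝ) - x) ^ s‖
        = Real.exp (-x) * x ^ ℓ / ℓ.factorial * |(ℓ:ℝ) - x| ^ s := by
      rw [Real.norm_eq_abs, abs_mul, abs_pow]
      congr 1
      rw [abs_of_nonneg (by positivity)]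
    rw [h1]
    have h2 : |(ℓ:ℝ) - x| ^ s ≤ ((ℓ:ℝ) + x) ^ s := by
      have : |(ℓ:ℝ) - x| ≤ (ℓ:ℝ) + x := by
        rw [abs_sub_le_iff]; constructor <;> nlinarith [Nat.cast_nonneg (α := ℝ) ℓ]
      exact pow_le_pow_left₀ (abs_nonneg _) this s
    calc Real.exp (-x) * x ^ ℓ / ℓ.factorial * |(ℓ:ℝ) - x| ^ s
        ≤ Real.exp (-x) * x ^ ℓ / ℓ.factorial * ((ℓ:ℝ) + x) ^ s := by gcongr <;> positivity
      _ = ∑ j ∈ range (s+1), (Real.exp (-x) * x^(s-j) * s.choose j) * ((ℓ:ℝ)^j * x^ℓ / ℓ.factorial) := by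
          rw [add_pow, mul_sum]
          refine Finset.sum_congr rfl fun j hj => ?_
          field_simp

lemma stein (x : ℝ) (hx : 0 ≤ x) (s : ℕ) :
    (∑' ℓ : ℕ, Real.exp (-x) * x ^ ℓ / ℓ.factorial * ((ℓ : ℝ) - x) ^ (s+1))
    = x * ∑ j ∈ range s, (s.choose j : ℝ) *
        ∑' ℓ : ℕ, Real.exp (-x) * x ^ ℓ / ℓ.factorial * ((ℓ : ℝ) - x) ^ j := by
  set p : ℕ → ℝ := fun ℓ => Real.exp (-x) * x ^ ℓ / ℓ.factorial with hp
  set M : ℕ → ℝ := fun j => ∑' ℓ : ℕ, p ℓ * ((ℓ : ℝ) - x) ^ j with hM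
  have hsum : ∀ j, Summable (fun ℓ : ℕ => p ℓ * ((ℓ : ℝ) - x) ^ j) := fun j => sum2 x hx j
  -- Summability of ℓ ↦ p ℓ * ℓ * (ℓ-x)^s
  have key : (fun ℓ : ℕ => p ℓ * ℓ * ((ℓ:ℝ) - x) ^ s)
      = fun ℓ : ℕ => p ℓ * ((ℓ:ℝ) - x) ^ (s+1) + x * (p ℓ * ((ℓ:ℝ) - x) ^ s) := by
    funext ℓ; ring
  have hsum2 : Summable (fun ℓ : ℕ => p ℓ * ℓ * ((ℓ:ℝ) - x) ^ s) := by
    rw [key]; exact (hsum (s+1)).add ((hsum s).mul_left x)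
  have step1 : M (s+1) = (∑' ℓ : ℕ, p ℓ * ℓ * ((ℓ:ℝ) - x) ^ s) - x * M s := by
    simp only [hM]
    have : (fun ℓ : ℕ => p ℓ * ((ℓ:ℝ) - x) ^ (s+1))
        = fun ℓ : ℕ => p ℓ * ℓ * ((ℓ:ℝ) - x) ^ s - x * (p ℓ * ((ℓ:ℝ) - x) ^ s) := by
      funext ℓ; ring
    rw [this, Summable.tsum_sub hsum2 ((hsum s).mul_left x), tsum_mul_left]
  have step2 : (∑' ℓ : ℕ, p ℓ * ℓ * ((ℓ:ℝ) - x) ^ s)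
      = x * ∑' m : ℕ, p m * (((m:ℝ) - x) + 1) ^ s := by
    rw [Summable.tsum_eq_zero_add hsum2]
    simp only [Nat.cast_zero, mul_zero, zero_mul, zero_add]
    rw [← tsum_mul_left]
    congr 1; funext m
    have hfac : ((m+1).factorial : ℝ) = (m+1) * m.factorial := by
      push_cast [Nat.factorial_succ]; ring
    have : p (m+1) * ((m:ℕ)+1 : ℕ) = x * p m := by
      rw [hp]; simp only; rw [hfac]
      have h1 : ((m:ℝ)+1) ≠ 0 := by positivity
      field_simp
      push_cast; ring
    push_cast
    push_cast at this
    calc p (m+1) * ((m:ℝ)+1) * ((m:ℝ)+1-x)^s = (p (m+1) * ((m:ℝ)+1)) * (((m:ℝ)-x)+1)^s := by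
          ring_nf
      _ = x * (p m * (((m:ℝ)-x)+1)^s) := by rw [this]; ring
  have step3 : (∑' m : ℕ, p m * (((m:ℝ) - x) + 1) ^ s)
      = ∑ j ∈ range (s+1), (s.choose j : ℝ) * M j := by
    have hexp : ∀ m : ℕ, p m * (((m:ℝ) - x) + 1) ^ s
        = ∑ j ∈ range (s+1), (s.choose j : ℝ) * (p m * ((m:ℝ) - x) ^ j) := by
      intro m
      rw [add_pow, mul_sum]
      refine Finset.sum_congr rfl fun j hj => ?_
      rw [one_pow]; ring
    rw [tsum_congr hexp, Summable.tsum_finsetSum (fun j _ => (hsum j).mul_left _)]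
    refine Finset.sum_congr rfl fun j hj => ?_
    rw [tsum_mul_left]
  have step4 : ∑ j ∈ range (s+1), (s.choose j : ℝ) * M j
      = (∑ j ∈ range s, (s.choose j : ℝ) * M j) + M s := by
    rw [Finset.sum_range_succ, Nat.choose_self]; norm_num
  show M (s+1) = x * ∑ j ∈ range s, (s.choose j : ℝ) * M j
  rw [step1, step2, step3, step4]; ring
lemma M0 (x : ℝ) :
    ∑' ℓ : ℕ, Real.exp (-x) * x ^ ℓ / ℓ.factorial * ((ℓ : ℝ) - x) ^ 0 = 1 := by
  simp only [pow_zero, mul_one, mul_div_assoc]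
  rw [tsum_mul_left]
  have : ∑' ℓ : ℕ, x ^ ℓ / (ℓ.factorial : ℝ) = Real.exp x := by
    rw [Real.exp_eq_exp_ℝ, NormedSpace.exp_eq_tsum_div]
  rw [this, ← Real.exp_add]
  simp

def IsPartOn {γ : Type*} (t : Finset γ) (k : ℕ) (P : Finset (Finset γ)) : Prop :=
  P.card = k ∧ (∀ B ∈ P, 2 ≤ B.card) ∧ (∀ B ∈ P, B ⊆ t) ∧ ∀ x ∈ t, ∃! B, B ∈ P ∧ x ∈ B

noncomputable def partCount {γ : Type*} (t : Finset γ) (k : ℕ) : ℕ :=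
  Nat.card {P : Finset (Finset γ) // IsPartOn t k P}

variable {γ δ : Type*} [DecidableEq γ] [DecidableEq δ]

lemma map_pre {f : γ ↪ δ} {t : Finset γ} {C : Finset δ} (hC : C ⊆ t.map f) :
    (C.preimage f f.injective.injOn).map f = C := by
  ext y
  simp only [Finset.mem_map, Finset.mem_preimage]
  constructor
  · rintro ⟨x, hx, rfl⟩; exact hx
  · intro hy
    obtain ⟨x, _, rfl⟩ := Finset.mem_map.mp (hC hy)
    exact ⟨x, hy, rfl⟩

lemma transport (f : γ ↪ δ) (t : Finset γ) (k : ℕ) :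
    partCount t k = partCount (t.map f) k := by
  unfold partCount
  apply Nat.card_congr
  have hinj : ∀ B : Finset δ, Set.InjOn f (f ⁻¹' (B : Set δ)) := fun B => f.injective.injOn
  refine ⟨fun ⟨P, hP⟩ => ⟨P.image (fun B => B.map f), ?_⟩,
         fun ⟨Q, hQ⟩ => ⟨Q.image (fun B => B.preimage f (hinj B)), ?_⟩, ?_, ?_⟩
  · obtain ⟨hcard, hblocks, hsub, hcover⟩ := hP
    refine ⟨?_, ?_, ?_, ?_⟩
    · rw [Finset.card_image_of_injective _ (Finset.map_injective f), hcard]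
    · intro B' hB'
      obtain ⟨B, hB, rfl⟩ := Finset.mem_image.mp hB'
      rw [Finset.card_map]; exact hblocks B hB
    · intro B' hB'
      obtain ⟨B, hB, rfl⟩ := Finset.mem_image.mp hB'
      exact Finset.map_subset_map.mpr (hsub B hB)
    · intro y hy
      obtain ⟨x, hx, rfl⟩ := Finset.mem_map.mp hy
      obtain ⟨B, ⟨hBP, hxB⟩, huniq⟩ := hcover x hx
      refine ⟨B.map f, ⟨Finset.mem_image_of_mem _ hBP, Finset.mem_map_of_mem f hxB⟩, ?_⟩
      rintro C ⟨hC, hfxC⟩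
      obtain ⟨B₁, hB₁, rfl⟩ := Finset.mem_image.mp hC
      rw [huniq B₁ ⟨hB₁, (Finset.mem_map' f).mp hfxC⟩]
  · obtain ⟨hcard, hblocks, hsub, hcover⟩ := hQ
    have hkey : ∀ C ∈ Q, (C.preimage f (hinj C)).map f = C := fun C hC => map_pre (hsub C hC)
    have hpc : ∀ C ∈ Q, (C.preimage f (hinj C)).card = C.card := by
      intro C hC
      conv_rhs => rw [← hkey C hC]
      rw [Finset.card_map]
    refine ⟨?_, ?_, ?_, ?_⟩
    · rw [Finset.card_image_of_injOn, hcard]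
      intro C hC C' hC' h
      dsimp only at h
      rw [← hkey C (Finset.mem_coe.mp hC), ← hkey C' (Finset.mem_coe.mp hC'), h]
    · intro B hB
      obtain ⟨C, hC, rfl⟩ := Finset.mem_image.mp hB
      rw [hpc C hC]; exact hblocks C hC
    · intro B hB
      obtain ⟨C, hC, rfl⟩ := Finset.mem_image.mp hB
      intro x hx
      have : f x ∈ C := Finset.mem_preimage.mp hx
      have := hsub C hC this
      obtain ⟨x', hx', hfx⟩ := Finset.mem_map.mp this
      rwa [← f.injective hfx]
    · intro x hx
      have hfx : f x ∈ t.map f := Finset.mem_map_of_mem f hx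
      obtain ⟨C, ⟨hCQ, hfxC⟩, huniq⟩ := hcover (f x) hfx
      refine ⟨C.preimage f (hinj C), ⟨Finset.mem_image_of_mem _ hCQ, Finset.mem_preimage.mpr hfxC⟩, ?_⟩
      rintro D ⟨hD, hxD⟩
      obtain ⟨C₁, hC₁, rfl⟩ := Finset.mem_image.mp hD
      rw [huniq C₁ ⟨hC₁, Finset.mem_preimage.mp hxD⟩]
  · rintro ⟨P, hP⟩
    apply Subtype.ext
    simp only [Finset.image_image]
    have : ∀ B ∈ P, (Function.comp (fun C => C.preimage f (hinj C)) (fun B => B.map f)) B = id B := by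
      intro B _
      simp only [Function.comp, id]
      exact Finset.preimage_map f B
    rw [Finset.image_congr this, Finset.image_id]
  · rintro ⟨Q, hQ⟩
    apply Subtype.ext
    simp only [Finset.image_image]
    have : ∀ C ∈ Q, (Function.comp (fun B : Finset γ => B.map f) (fun C => C.preimage f (hinj C))) C = id C := by
      intro C hC
      simp only [Function.comp, id]
      exact map_pre (hQ.2.2.1 C hC)
    rw [Finset.image_congr this, Finset.image_id]


lemma L0 (s k : ℕ) : assocStirling s k = partCount (univ : Finset (Fin s)) k := by
  unfold assocStirling partCount IsPartOn
  apply Nat.card_congr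
  apply Equiv.subtypeEquivRight
  intro P
  constructor
  · rintro ⟨h1, h2, h3⟩
    exact ⟨h1, h2, fun B _ => Finset.subset_univ B, fun x _ => h3 x⟩
  · rintro ⟨h1, h2, h3, h4⟩
    exact ⟨h1, h2, fun x => h4 x (mem_univ x)⟩

lemma partCount_eq (t : Finset γ) (k : ℕ) : partCount t k = assocStirling t.card k := by
  have e : Fin t.card ≃ ↥t := (Fintype.equivFinOfCardEq (Fintype.card_coe t)).symm
  have emb : Fin t.card ↪ γ := e.toEmbedding.trans (Function.Embedding.subtype _)
  rw [L0, transport (e.toEmbedding.trans (Function.Embedding.subtype _)) (univ : Finset (Fin t.card)) k]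
  congr 1
  rw [← Finset.map_map, Finset.map_univ_equiv]
  ext x; simp


lemma disj_of_part {γ' : Type*} {t : Finset γ'} {k : ℕ} {P : Finset (Finset γ')}
    (h : IsPartOn t k P) {B C : Finset γ'} (hB : B ∈ P) (hC : C ∈ P) (hne : B ≠ C) :
    Disjoint B C := by
  rw [Finset.disjoint_left]
  intro x hxB hxC
  have hxt : x ∈ t := h.2.2.1 B hB hxB
  obtain ⟨D, _, huniq⟩ := h.2.2.2 x hxt
  exact hne ((huniq B ⟨hB, hxB⟩).trans (huniq C ⟨hC, hxC⟩).symm)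

section Recurrence
open Classical in
noncomputable def fwd {n : ℕ} (a : Fin (n+1)) (k : ℕ)
    (X : {P : Finset (Finset (Fin (n+1))) // IsPartOn univ (k+1) P}) :
    Σ A : Finset (Fin (n+1)), {P : Finset (Finset (Fin (n+1))) //
      (a ∈ A ∧ 2 ≤ A.card) ∧ IsPartOn ((univ : Finset (Fin (n+1))) \ A) k P} :=
  ⟨X.1.choose (a ∈ ·) (X.2.2.2.2 a (mem_univ a)),
   ⟨X.1.erase (X.1.choose (a ∈ ·) (X.2.2.2.2 a (mem_univ a))), by
  obtain ⟨P, hP⟩ := X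
  have hp : ∃! B, B ∈ P ∧ a ∈ B := hP.2.2.2 a (mem_univ a)
  set B₀ := P.choose (a ∈ ·) hp with hB₀
  have hmem : B₀ ∈ P := P.choose_mem _ hp
  have haB₀ : a ∈ B₀ := P.choose_property (a ∈ ·) hp
  refine ⟨⟨haB₀, hP.2.1 B₀ hmem⟩, ?_, ?_, ?_, ?_⟩
  · rw [Finset.card_erase_of_mem hmem, hP.1]; omega
  · intro B hB; exact hP.2.1 B (Finset.mem_of_mem_erase hB)
  · intro B hB x hxB
    rw [Finset.mem_sdiff]
    refine ⟨mem_univ x, fun hxB₀ => ?_⟩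
    have := disj_of_part hP (Finset.mem_of_mem_erase hB) hmem (Finset.ne_of_mem_erase hB)
    exact (Finset.disjoint_left.mp this hxB) hxB₀
  · intro x hx
    rw [Finset.mem_sdiff] at hx
    obtain ⟨B, ⟨hBP, hxB⟩, huniq⟩ := hP.2.2.2 x (mem_univ x)
    have hBne : B ≠ B₀ := fun h => hx.2 (h ▸ hxB)
    refine ⟨B, ⟨Finset.mem_erase.mpr ⟨hBne, hBP⟩, hxB⟩, ?_⟩
    rintro D ⟨hD, hxD⟩
    exact huniq D ⟨Finset.mem_of_mem_erase hD, hxD⟩⟩⟩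

noncomputable def bwd {n : ℕ} (a : Fin (n+1)) (k : ℕ)
    (Y : Σ A : Finset (Fin (n+1)), {P : Finset (Finset (Fin (n+1))) //
      (a ∈ A ∧ 2 ≤ A.card) ∧ IsPartOn ((univ : Finset (Fin (n+1))) \ A) k P}) :
    {P : Finset (Finset (Fin (n+1))) // IsPartOn univ (k+1) P} :=
  ⟨insert Y.1 Y.2.1, by
  obtain ⟨A, ⟨Q, ⟨⟨haA, hA2⟩, hQ⟩⟩⟩ := Y
  have hAQ : A ∉ Q := fun h => by
    have := hQ.2.2.1 A h haA
    rw [Finset.mem_sdiff] at this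
    exact this.2 haA
  refine ⟨?_, ?_, fun B _ => Finset.subset_univ B, ?_⟩
  · rw [Finset.card_insert_of_notMem hAQ, hQ.1]
  · intro B hB
    rcases Finset.mem_insert.mp hB with rfl | hB
    · exact hA2
    · exact hQ.2.1 B hB
  · intro x _
    by_cases hxA : x ∈ A
    · refine ⟨A, ⟨Finset.mem_insert_self A Q, hxA⟩, ?_⟩
      rintro D ⟨hD, hxD⟩
      rcases Finset.mem_insert.mp hD with rfl | hD
      · rfl
      · have := hQ.2.2.1 D hD hxD
        rw [Finset.mem_sdiff] at this
        exact absurd hxA this.2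
    · have hx : x ∈ (univ : Finset (Fin (n+1))) \ A := Finset.mem_sdiff.mpr ⟨mem_univ x, hxA⟩
      obtain ⟨B, ⟨hBQ, hxB⟩, huniq⟩ := hQ.2.2.2 x hx
      refine ⟨B, ⟨Finset.mem_insert_of_mem hBQ, hxB⟩, ?_⟩
      rintro D ⟨hD, hxD⟩
      rcases Finset.mem_insert.mp hD with rfl | hD
      · exact absurd hxD hxA
      · exact huniq D ⟨hD, hxD⟩⟩

lemma sig_ext {n : ℕ} {a : Fin (n+1)} {k : ℕ}
    {A A' : Finset (Fin (n+1))}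
    (Q : {P : Finset (Finset (Fin (n+1))) //
      (a ∈ A ∧ 2 ≤ A.card) ∧ IsPartOn ((univ : Finset (Fin (n+1))) \ A) k P})
    (Q' : {P : Finset (Finset (Fin (n+1))) //
      (a ∈ A' ∧ 2 ≤ A'.card) ∧ IsPartOn ((univ : Finset (Fin (n+1))) \ A') k P})
    (hA : A = A') (hQ : Q.1 = Q'.1) :
    (⟨A, Q⟩ : Σ A : Finset (Fin (n+1)), {P : Finset (Finset (Fin (n+1))) //
      (a ∈ A ∧ 2 ≤ A.card) ∧ IsPartOn ((univ : Finset (Fin (n+1))) \ A) k P}) = ⟨A', Q'⟩ := by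
  subst hA
  exact congrArg _ (Subtype.ext hQ)

noncomputable def recEquiv {n : ℕ} (a : Fin (n+1)) (k : ℕ) :
    {P : Finset (Finset (Fin (n+1))) // IsPartOn univ (k+1) P} ≃
    Σ A : Finset (Fin (n+1)), {P : Finset (Finset (Fin (n+1))) //
      (a ∈ A ∧ 2 ≤ A.card) ∧ IsPartOn ((univ : Finset (Fin (n+1))) \ A) k P} := by
  classical
  refine ⟨fwd a k, bwd a k, ?_, ?_⟩
  · rintro ⟨P, hP⟩
    apply Subtype.ext
    show insert _ (P.erase _) = P
    exact Finset.insert_erase (P.choose_mem _ (hP.2.2.2 a (mem_univ a)))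
  · rintro ⟨A, ⟨Q, ⟨⟨haA, hA2⟩, hQ⟩⟩⟩
    have hAQ : A ∉ Q := fun h => by
      have := hQ.2.2.1 A h haA
      rw [Finset.mem_sdiff] at this
      exact this.2 haA
    set P : Finset (Finset (Fin (n+1))) := insert A Q with hPdef
    have hP : IsPartOn (univ : Finset (Fin (n+1))) (k+1) P := (bwd a k ⟨A, ⟨Q, ⟨⟨haA, hA2⟩, hQ⟩⟩⟩).2
    have hp : ∃! B, B ∈ P ∧ a ∈ B := hP.2.2.2 a (mem_univ a)
    have hsel : P.choose (a ∈ ·) hp = A := by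
      have h1 : P.choose (a ∈ ·) hp ∈ P ∧ a ∈ P.choose (a ∈ ·) hp :=
        ⟨P.choose_mem _ hp, P.choose_property (a ∈ ·) hp⟩
      exact hp.unique h1 ⟨Finset.mem_insert_self A Q, haA⟩
    apply sig_ext
    · exact hsel
    · show P.erase (P.choose (a ∈ ·) hp) = Q
      rw [hsel, hPdef, Finset.erase_insert hAQ]
end Recurrence

lemma recurA (n k : ℕ) (a : Fin (n+1)) :
    assocStirling (n+1) (k+1)
      = ∑ A : Finset (Fin (n+1)),
          (if a ∈ A ∧ 2 ≤ A.card then assocStirling (n+1 - A.card) k else 0) := by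
  classical
  rw [L0]
  unfold partCount
  rw [Nat.card_congr (recEquiv a k)]
  haveI : ∀ A : Finset (Fin (n+1)),
      Fintype {P : Finset (Finset (Fin (n+1))) //
        (a ∈ A ∧ 2 ≤ A.card) ∧ IsPartOn ((univ : Finset (Fin (n+1))) \ A) k P} :=
    fun A => Fintype.ofFinite _
  rw [Nat.card_eq_fintype_card, Fintype.card_sigma]
  refine Finset.sum_congr rfl fun A _ => ?_
  by_cases h : a ∈ A ∧ 2 ≤ A.card
  · rw [if_pos h, ← Nat.card_eq_fintype_card]
    have e : {P : Finset (Finset (Fin (n+1))) //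
        (a ∈ A ∧ 2 ≤ A.card) ∧ IsPartOn ((univ : Finset (Fin (n+1))) \ A) k P} ≃
        {P : Finset (Finset (Fin (n+1))) // IsPartOn ((univ : Finset (Fin (n+1))) \ A) k P} :=
      Equiv.subtypeEquivRight (fun P => and_iff_right h)
    rw [Nat.card_congr e]
    have : ((univ : Finset (Fin (n+1))) \ A).card = n + 1 - A.card := by
      rw [← Finset.compl_eq_univ_sdiff, Finset.card_compl, Fintype.card_fin]
    rw [show (Nat.card {P : Finset (Finset (Fin (n+1))) //
        IsPartOn ((univ : Finset (Fin (n+1))) \ A) k P}) = partCount ((univ : Finset (Fin (n+1))) \ A) k from rfl,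
      partCount_eq, this]
  · rw [if_neg h]
    have : IsEmpty {P : Finset (Finset (Fin (n+1))) //
        (a ∈ A ∧ 2 ≤ A.card) ∧ IsPartOn ((univ : Finset (Fin (n+1))) \ A) k P} := by
      constructor; rintro ⟨P, hc, _⟩; exact h hc
    exact Fintype.card_eq_zero

lemma count_subsets (n j : ℕ) (a : Fin (n+1)) (hj : 1 ≤ j) :
    ((powersetCard j (univ : Finset (Fin (n+1)))).filter (fun A => a ∈ A)).card
      = n.choose (j-1) := by
  classical
  have hcompl : (powersetCard j (univ : Finset (Fin (n+1)))).filter (fun A => ¬ a ∈ A)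
      = powersetCard j ((univ : Finset (Fin (n+1))).erase a) := by
    ext A
    simp only [Finset.mem_filter, Finset.mem_powersetCard, Finset.subset_erase]
    tauto
  have hadd := Finset.card_filter_add_card_filter_not
    (s := powersetCard j (univ : Finset (Fin (n+1)))) (p := fun A => a ∈ A)
  rw [hcompl] at hadd
  rw [Finset.card_powersetCard, Finset.card_powersetCard, Finset.card_univ,
    Fintype.card_fin, Finset.card_erase_of_mem (mem_univ a), Finset.card_univ,
    Fintype.card_fin] at hadd
  obtain ⟨i, rfl⟩ : ∃ i, j = i + 1 := ⟨j - 1, by omega⟩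
  simp only [Nat.add_sub_cancel]
  have hpascal : (n+1).choose (i+1) = n.choose i + n.choose (i+1) := Nat.choose_succ_succ n i
  simp only [Nat.succ_sub_one] at hadd ⊢
  omega

lemma recurrence (n k : ℕ) :
    assocStirling (n+1) (k+1) = ∑ i ∈ Finset.Icc 1 n, n.choose i * assocStirling (n - i) k := by
  classical
  rw [recurA n k 0]
  rw [← Finset.powerset_univ, Finset.sum_powerset]
  have huniv : (univ : Finset (Fin (n+1))).card = n + 1 := by
    rw [Finset.card_univ, Fintype.card_fin]
  rw [huniv]
  have hterm : ∀ j ∈ Finset.range (n+2),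
      (∑ A ∈ powersetCard j (univ : Finset (Fin (n+1))),
        (if (0 : Fin (n+1)) ∈ A ∧ 2 ≤ A.card then assocStirling (n+1 - A.card) k else 0))
      = if 2 ≤ j then n.choose (j-1) * assocStirling (n+1-j) k else 0 := by
    intro j _
    by_cases hj : 2 ≤ j
    · rw [if_pos hj]
      have : ∀ A ∈ powersetCard j (univ : Finset (Fin (n+1))),
          (if (0 : Fin (n+1)) ∈ A ∧ 2 ≤ A.card then assocStirling (n+1 - A.card) k else 0)
          = if (0 : Fin (n+1)) ∈ A then assocStirling (n+1-j) k else 0 := by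
        intro A hA
        have hAc : A.card = j := (Finset.mem_powersetCard.mp hA).2
        rw [hAc]
        by_cases h0 : (0 : Fin (n+1)) ∈ A
        · rw [if_pos ⟨h0, hj⟩, if_pos h0]
        · rw [if_neg (fun hc => h0 hc.1), if_neg h0]
      rw [Finset.sum_congr rfl this, ← Finset.sum_filter, Finset.sum_const,
        count_subsets n j 0 (by omega), smul_eq_mul]
    · rw [if_neg hj]
      apply Finset.sum_eq_zero
      intro A hA
      have hAc : A.card = j := (Finset.mem_powersetCard.mp hA).2
      rw [if_neg]
      rintro ⟨_, h2⟩
      omega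
  rw [Finset.sum_congr rfl hterm]
  rw [Finset.sum_range_succ']
  rw [if_neg (by omega : ¬ 2 ≤ 0), add_zero]
  have h2 : ∀ i ∈ Finset.range (n+1),
      (if 2 ≤ i+1 then n.choose (i+1-1) * assocStirling (n+1-(i+1)) k else 0)
      = if 1 ≤ i then n.choose i * assocStirling (n-i) k else 0 := by
    intro i _
    by_cases hi : 1 ≤ i
    · rw [if_pos (by omega), if_pos hi, Nat.add_sub_cancel, Nat.succ_sub_succ]
    · rw [if_neg (by omega), if_neg hi]
  rw [Finset.sum_congr rfl h2, ← Finset.sum_filter]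
  congr 1
  ext i
  simp only [Finset.mem_filter, Finset.mem_range, Finset.mem_Icc]
  omega

lemma vanish {γ' : Type*} [DecidableEq γ'] (t : Finset γ') (k : ℕ) (h : t.card < 2 * k) :
    partCount t k = 0 := by
  unfold partCount
  rw [Nat.card_eq_zero]
  left
  constructor
  rintro ⟨P, hP⟩
  have hdisj : (P : Set (Finset γ')).PairwiseDisjoint id := by
    intro B hB C hC hne
    exact disj_of_part hP hB hC hne
  have hsub : P.biUnion id ⊆ t := by
    intro x hx
    obtain ⟨B, hB, hxB⟩ := Finset.mem_biUnion.mp hx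
    exact hP.2.2.1 B hB hxB
  have hcard : (P.biUnion id).card = ∑ B ∈ P, B.card := Finset.card_biUnion hdisj
  have h2k : 2 * k ≤ ∑ B ∈ P, B.card := by
    calc 2 * k = ∑ _B ∈ P, 2 := by rw [Finset.sum_const, hP.1]; ring
      _ ≤ ∑ B ∈ P, B.card := Finset.sum_le_sum fun B hB => hP.2.1 B hB
  have := Finset.card_le_card hsub
  omega

lemma vanish' (s k : ℕ) (h : s < k) : assocStirling s k = 0 := by
  rw [L0]
  apply vanish
  simp only [Finset.card_univ, Fintype.card_fin]
  omega

lemma base00 : assocStirling 0 0 = 1 := by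
  unfold assocStirling
  haveI : Unique {P : Finset (Finset (Fin 0)) //
      P.card = 0 ∧ (∀ B ∈ P, 2 ≤ B.card) ∧ ∀ x : Fin 0, ∃! B, B ∈ P ∧ x ∈ B} := by
    refine ⟨⟨⟨∅, by simp⟩⟩, fun P => Subtype.ext ?_⟩
    have := P.2.1
    simpa [Finset.card_eq_zero] using this
  exact Nat.card_unique

lemma vanish0 (n : ℕ) : assocStirling (n+1) 0 = 0 := by
  unfold assocStirling
  rw [Nat.card_eq_zero]
  left
  constructor
  rintro ⟨P, h1, _, h3⟩
  obtain ⟨B, ⟨hB, _⟩, _⟩ := h3 0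
  rw [Finset.card_eq_zero.mp h1] at hB
  exact absurd hB (Finset.notMem_empty B)

lemma Trec (x : ℝ) (s : ℕ) :
    (∑ k ∈ range (s+2), x^k * (assocStirling (s+1) k : ℝ))
    = x * ∑ j ∈ range s, (s.choose j : ℝ) * ∑ k ∈ range (j+1), x^k * (assocStirling j k : ℝ) := by
  rw [Finset.sum_range_succ']
  rw [vanish0, Nat.cast_zero, mul_zero, add_zero]
  have step1 : ∀ k ∈ range (s+1),
      x^(k+1) * (assocStirling (s+1) (k+1) : ℝ)
      = ∑ i ∈ Finset.Icc 1 s, x^(k+1) * ((s.choose i : ℝ) * (assocStirling (s-i) k : ℝ)) := by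
    intro k _
    rw [recurrence, Nat.cast_sum, Finset.mul_sum]
    refine Finset.sum_congr rfl fun i _ => ?_
    push_cast
    ring
  rw [Finset.sum_congr rfl step1, Finset.sum_comm]
  have step2 : ∀ i ∈ Finset.Icc 1 s,
      (∑ k ∈ range (s+1), x^(k+1) * ((s.choose i : ℝ) * (assocStirling (s-i) k : ℝ)))
      = (s.choose i : ℝ) * x * ∑ k ∈ range (s-i+1), x^k * (assocStirling (s-i) k : ℝ) := by
    intro i hi
    rw [Finset.mem_Icc] at hi
    have hsub : range (s-i+1) ⊆ range (s+1) := by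
      apply Finset.range_subset_range.mpr; omega
    rw [Finset.mul_sum]
    rw [← Finset.sum_subset hsub]
    · refine Finset.sum_congr rfl fun k _ => ?_
      ring
    · intro k _ hk
      rw [Finset.mem_range, not_lt] at hk
      rw [vanish' (s-i) k (by omega), Nat.cast_zero]
      ring
  rw [Finset.sum_congr rfl step2]
  rw [Finset.mul_sum]
  refine Finset.sum_nbij' (fun i => s - i) (fun j => s - j) ?_ ?_ ?_ ?_ ?_
  · intro i hi; rw [Finset.mem_Icc] at hi; rw [Finset.mem_range]; omega
  · intro j hj; rw [Finset.mem_range] at hj; rw [Finset.mem_Icc]; omega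
  · intro i hi; rw [Finset.mem_Icc] at hi; omega
  · intro j hj; rw [Finset.mem_range] at hj; omega
  · intro i hi
    rw [Finset.mem_Icc] at hi
    rw [Nat.choose_symm (by omega : i ≤ s)]
    ring

theorem poisson_centered_moment_closed_form
    (x : ℝ) (hx : 0 ≤ x) (s : ℕ) :
    ∑' ℓ : ℕ, Real.exp (-x) * x ^ ℓ / ℓ.factorial * ((ℓ : ℝ) - x) ^ s
      = ∑ k ∈ Finset.range (s + 1), x ^ k * (assocStirling s k : ℝ) := by
  induction s using Nat.strong_induction_on with
  | _ s ih =>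
    cases s with
    | zero =>
      rw [M0 x, Finset.sum_range_one, base00]
      norm_num
    | succ s =>
      rw [stein x hx s]
      have hstep : ∀ j ∈ Finset.range s,
          (s.choose j : ℝ) * ∑' ℓ : ℕ, Real.exp (-x) * x ^ ℓ / ℓ.factorial * ((ℓ : ℝ) - x) ^ j
          = (s.choose j : ℝ) * ∑ k ∈ Finset.range (j + 1), x ^ k * (assocStirling j k : ℝ) := by
        intro j hj
        rw [Finset.mem_range] at hj
        rw [ih j (by omega)]
      rw [Finset.sum_congr rfl hstep]
      exact (Trec x s).symm
end

section
/- Let P be a Poisson random variable with parameter x. The centered moment m_s(x) = E[(P − x)^s], viewed as a polynomial in x, has degree ⌊s/2⌋ for s ≥ 2; moreover, for even s = 2m the leading coefficient (coefficient of x^m) equals (2m−1)!! = (2m−1)(2m−3)⋯1. -/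
open MeasureTheory ProbabilityTheory Filter Real Finset

namespace PoissonAux

noncomputable def q : ℕ → Polynomial ℝ
  | 0 => 1
  | (s+1) => Polynomial.X * ∑ j ∈ (Finset.range s).attach,
      ((s.choose j.1 : ℝ)) • q j.1
  decreasing_by exact Nat.lt_succ_of_lt (Finset.mem_range.mp j.2)

lemma q_succ (s : ℕ) :
    q (s+1) = Polynomial.X * ∑ j ∈ Finset.range s, ((s.choose j : ℝ)) • q j := by
  rw [q, ← Finset.sum_attach (Finset.range s) (fun j => ((s.choose j : ℝ)) • q j)]

lemma q_succ_coeff (s n : ℕ) :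
    (q (s+1)).coeff (n+1) = ∑ j ∈ Finset.range s, (s.choose j : ℝ) * (q j).coeff n := by
  rw [q_succ, Polynomial.coeff_X_mul, Polynomial.finset_sum_coeff]
  simp [Polynomial.coeff_smul, smul_eq_mul]

lemma q_coeff_nonneg : ∀ s n, 0 ≤ (q s).coeff n := by
  intro s
  induction s using Nat.strong_induction_on with
  | _ s ih =>
    match s with
    | 0 => intro n; simp [q, Polynomial.coeff_one]; positivity
    | s+1 =>
      intro n
      match n with
      | 0 => rw [q_succ, Polynomial.mul_coeff_zero]; simp
      | n+1 =>
        rw [q_succ_coeff]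
        apply Finset.sum_nonneg
        intro j hj
        exact mul_nonneg (by positivity) (ih j (Nat.lt_succ_of_lt (Finset.mem_range.mp hj)) n)

lemma q_natDegree_le : ∀ s, (q s).natDegree ≤ s / 2 := by
  intro s
  induction s using Nat.strong_induction_on with
  | _ s ih =>
    match s with
    | 0 => simp [q]
    | 1 => rw [q_succ]; simp
    | s+2 =>
      rw [q_succ]
      refine le_trans (Polynomial.natDegree_mul_le) ?_
      have h1 : (∑ j ∈ Finset.range (s+1), (((s+1).choose j : ℝ)) • q j).natDegree ≤ s/2 := by
        apply Polynomial.natDegree_sum_le_of_forall_le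
        intro j hj
        refine le_trans (Polynomial.natDegree_smul_le _ _) ?_
        refine le_trans (ih j (Nat.lt_succ_of_lt (Finset.mem_range.mp hj))) ?_
        have := Finset.mem_range.mp hj
        omega
      have h2 := Polynomial.natDegree_X_le (R := ℝ)
      omega

lemma q_coeff_even : ∀ m, (q (2*m)).coeff m = ((2*m-1).doubleFactorial : ℝ) := by
  intro m
  induction m with
  | zero => simp [q]
  | succ m ih =>
    have h1 : 2*(m+1) = (2*m+1)+1 := by omega
    rw [h1, q_succ_coeff]
    rw [Finset.sum_eq_single (2*m)]
    · rw [ih]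
      have h2 : (2*m+1).choose (2*m) = 2*m+1 := by
        rw [← Nat.choose_symm (by omega)]
        simp
      rw [h2]
      have h3 : (2*m+1+1-1).doubleFactorial = (2*m+1) * (2*m-1).doubleFactorial := by
        match m with
        | 0 => rfl
        | k+1 =>
          rw [show 2*(k+1)+1+1-1 = (2*(k+1)-1)+2 from by omega, Nat.doubleFactorial_add_two,
            show 2*(k+1)-1+2 = 2*(k+1)+1 from by omega]
      rw [h3]
      push_cast
      ring
    · intro j hj hne
      have hj' := Finset.mem_range.mp hj
      have : (q j).coeff m = 0 := by
        apply Polynomial.coeff_eq_zero_of_natDegree_lt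
        refine lt_of_le_of_lt (q_natDegree_le j) ?_
        omega
      rw [this, mul_zero]
    · intro h
      exact absurd (Finset.mem_range.mpr (by omega)) h

lemma q_coeff_top : ∀ s, 2 ≤ s → 0 < (q s).coeff (s / 2) := by
  intro s hs
  obtain ⟨s', rfl⟩ : ∃ s', s = s' + 1 := ⟨s - 1, by omega⟩
  set m := (s'+1)/2 with hm
  have hm1 : 1 ≤ m := by omega
  have hmn : m = (m-1)+1 := by omega
  rw [hmn, q_succ_coeff]
  apply Finset.sum_pos'
  · intro j hj
    exact mul_nonneg (by positivity) (q_coeff_nonneg j (m-1))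
  · refine ⟨2*(m-1), Finset.mem_range.mpr (by omega), ?_⟩
    have h1 : (q (2*(m-1))).coeff (m-1) = ((2*(m-1)-1).doubleFactorial : ℝ) := q_coeff_even (m-1)
    rw [h1]
    have h2 : 0 < s'.choose (2*(m-1)) := Nat.choose_pos (by omega)
    have h3 : 0 < (2*(m-1)-1).doubleFactorial := Nat.doubleFactorial_pos _
    positivity

lemma q_natDegree (s : ℕ) (hs : 2 ≤ s) : (q s).natDegree = s / 2 :=
  le_antisymm (q_natDegree_le s)
    (Polynomial.le_natDegree_of_ne_zero (ne_of_gt (q_coeff_top s hs)))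



lemma summable_bound (t : ℕ) {x : ℝ} (hx : 0 ≤ x) :
    Summable (fun ℓ : ℕ => ((ℓ:ℝ) + x) ^ t * x ^ ℓ / ℓ.factorial) := by
  apply summable_of_ratio_norm_eventually_le (r := 1/2) (by norm_num)
  obtain ⟨N, hN⟩ := exists_nat_ge (2^(t+1) * x)
  filter_upwards [eventually_ge_atTop (max 1 N)] with n hn
  have h1 : 1 ≤ n := le_of_max_le_left hn
  have h1' : (1:ℝ) ≤ (n:ℝ) := by exact_mod_cast h1
  have h2 : (N:ℝ) ≤ (n:ℝ) := Nat.cast_le.mpr (le_of_max_le_right hn)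
  have hfac : (0:ℝ) < (n.factorial : ℝ) := by positivity
  rw [Real.norm_eq_abs, Real.norm_eq_abs, abs_of_nonneg (by positivity),
    abs_of_nonneg (by positivity)]
  have key : (((n:ℕ)+1:ℕ):ℝ) = (n:ℝ)+1 := by push_cast; ring
  rw [Nat.factorial_succ]
  push_cast
  have e1 : ((n:ℝ)+1+x)^t * x^(n+1) / (((n:ℝ)+1) * n.factorial)
      = ((n:ℝ)+1+x)^t * x / ((n:ℝ)+1) * (x^n / n.factorial) := by
    rw [pow_succ]; field_simp
  have e2 : (1:ℝ)/2 * (((n:ℝ)+x)^t * x^n / n.factorial)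
      = (1/2 * ((n:ℝ)+x)^t) * (x^n / n.factorial) := by ring
  rw [e1, e2]
  apply mul_le_mul_of_nonneg_right _ (by positivity)
  have keyp : ((n:ℝ)+1+x)^t ≤ 2^t * ((n:ℝ)+x)^t := by
    calc ((n:ℝ)+1+x)^t ≤ (2*((n:ℝ)+x))^t := by
          apply pow_le_pow_left₀ (by positivity) (by linarith)
      _ = 2^t * ((n:ℝ)+x)^t := mul_pow 2 _ t
  calc ((n:ℝ)+1+x)^t * x / ((n:ℝ)+1) ≤ 2^t * ((n:ℝ)+x)^t * x / ((n:ℝ)+1) := by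
        gcongr
    _ = ((n:ℝ)+x)^t * (2^t * x / ((n:ℝ)+1)) := by ring
    _ ≤ ((n:ℝ)+x)^t * (1/2) := by
        apply mul_le_mul_of_nonneg_left _ (by positivity)
        rw [div_le_iff₀ (by positivity)]
        have : (2:ℝ)^(t+1) = 2 * 2^t := by ring
        nlinarith [hN]
    _ = 1/2 * ((n:ℝ)+x)^t := by ring

lemma summable_of_le_bound {g : ℕ → ℝ} (t : ℕ) {x : ℝ} (hx : 0 ≤ x)
    (h : ∀ n : ℕ, |g n| ≤ Real.exp (-x) * (((n:ℝ) + x) ^ t * x ^ n / n.factorial)) :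
    Summable g := by
  apply Summable.of_norm
  refine Summable.of_nonneg_of_le (fun n => norm_nonneg _) (fun n => ?_)
    ((summable_bound t hx).mul_left (Real.exp (-x)))
  simpa [Real.norm_eq_abs] using h n

lemma abs_sub_le {x : ℝ} (hx : 0 ≤ x) (n : ℕ) : |(n:ℝ) - x| ≤ (n:ℝ) + x := by
  have : (0:ℝ) ≤ n := Nat.cast_nonneg n
  rw [abs_le]; constructor <;> linarith

lemma summable_main (s : ℕ) {x : ℝ} (hx : 0 ≤ x) :
    Summable (fun ℓ : ℕ => Real.exp (-x) * x ^ ℓ / ℓ.factorial * ((ℓ:ℝ) - x) ^ s) := by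
  apply summable_of_le_bound s hx
  intro n
  have h2 : |(n:ℝ) - x|^s ≤ ((n:ℝ) + x)^s :=
    pow_le_pow_left₀ (abs_nonneg _) (abs_sub_le hx n) s
  calc |Real.exp (-x) * x ^ n / n.factorial * ((n:ℝ) - x) ^ s|
      = Real.exp (-x) * x ^ n / n.factorial * |(n:ℝ) - x| ^ s := by
        rw [abs_mul, abs_pow, abs_of_nonneg (by positivity)]
    _ ≤ Real.exp (-x) * x ^ n / n.factorial * ((n:ℝ) + x) ^ s := by gcongr
    _ = Real.exp (-x) * (((n:ℝ) + x) ^ s * x ^ n / n.factorial) := by ring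

lemma summable_mul_nat (s : ℕ) {x : ℝ} (hx : 0 ≤ x) :
    Summable (fun ℓ : ℕ => Real.exp (-x) * x ^ ℓ / ℓ.factorial * (ℓ:ℝ) * ((ℓ:ℝ) - x) ^ s) := by
  apply summable_of_le_bound (s+1) hx
  intro n
  have h0 : (0:ℝ) ≤ n := Nat.cast_nonneg n
  have h2 : |(n:ℝ) - x|^s ≤ ((n:ℝ) + x)^s :=
    pow_le_pow_left₀ (abs_nonneg _) (abs_sub_le hx n) s
  calc |Real.exp (-x) * x ^ n / n.factorial * (n:ℝ) * ((n:ℝ) - x) ^ s|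
      = Real.exp (-x) * x ^ n / n.factorial * (n:ℝ) * |(n:ℝ) - x| ^ s := by
        rw [abs_mul, abs_pow, abs_of_nonneg (by positivity)]
    _ ≤ Real.exp (-x) * x ^ n / n.factorial * ((n:ℝ) + x) * ((n:ℝ) + x) ^ s := by
        gcongr
        linarith
    _ = Real.exp (-x) * (((n:ℝ) + x) ^ (s+1) * x ^ n / n.factorial) := by
        rw [pow_succ]; ring

lemma f_zero (x : ℝ) :
    ∑' ℓ : ℕ, Real.exp (-x) * x ^ ℓ / ℓ.factorial * ((ℓ:ℝ) - x) ^ 0 = 1 := by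
  simp only [pow_zero, mul_one]
  have h : ∀ ℓ:ℕ, Real.exp (-x) * x ^ ℓ / ℓ.factorial
      = Real.exp (-x) * (x ^ ℓ / ℓ.factorial) := fun ℓ => by ring
  rw [tsum_congr h, tsum_mul_left]
  have hexp : (∑' ℓ:ℕ, x ^ ℓ / (ℓ.factorial:ℝ)) = Real.exp x := by
    rw [Real.exp_eq_exp_ℝ, NormedSpace.exp_eq_tsum_div]
  rw [hexp, ← Real.exp_add]
  simp

lemma f_rec (s : ℕ) {x : ℝ} (hx : 0 ≤ x) :
    (∑' ℓ : ℕ, Real.exp (-x) * x ^ ℓ / ℓ.factorial * ((ℓ : ℝ) - x) ^ (s+1))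
      = x * ∑ j ∈ Finset.range s, (s.choose j : ℝ) *
          ∑' ℓ : ℕ, Real.exp (-x) * x ^ ℓ / ℓ.factorial * ((ℓ : ℝ) - x) ^ j := by
  have hsplit : ∀ ℓ : ℕ, Real.exp (-x) * x ^ ℓ / ℓ.factorial * ((ℓ : ℝ) - x) ^ (s+1)
      = Real.exp (-x) * x ^ ℓ / ℓ.factorial * (ℓ:ℝ) * ((ℓ:ℝ) - x) ^ s
        - x * (Real.exp (-x) * x ^ ℓ / ℓ.factorial * ((ℓ:ℝ) - x) ^ s) := by
    intro ℓ; rw [pow_succ]; ring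
  rw [tsum_congr hsplit, Summable.tsum_sub (summable_mul_nat s hx) ((summable_main s hx).mul_left x),
    tsum_mul_left]
  have hA : (∑' ℓ : ℕ, Real.exp (-x) * x ^ ℓ / ℓ.factorial * (ℓ:ℝ) * ((ℓ:ℝ) - x) ^ s)
      = x * ∑' ℓ : ℕ, Real.exp (-x) * x ^ ℓ / ℓ.factorial * (((ℓ:ℝ)+1) - x) ^ s := by
    rw [Summable.tsum_eq_zero_add (summable_mul_nat s hx)]
    simp only [Nat.cast_zero, mul_zero, zero_mul, zero_add]
    rw [← tsum_mul_left]
    congr 1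
    funext ℓ
    have hfac : ((ℓ.factorial : ℝ)) ≠ 0 := by positivity
    have hfac1 : (((ℓ+1).factorial : ℝ)) ≠ 0 := by positivity
    rw [Nat.factorial_succ]
    push_cast
    field_simp
    ring
  rw [hA]
  have hB : ∀ ℓ : ℕ, Real.exp (-x) * x ^ ℓ / ℓ.factorial * (((ℓ:ℝ)+1) - x) ^ s
      = ∑ j ∈ Finset.range (s+1), (s.choose j : ℝ) *
          (Real.exp (-x) * x ^ ℓ / ℓ.factorial * ((ℓ:ℝ) - x) ^ j) := by
    intro ℓ
    have : (((ℓ:ℝ)+1) - x) = ((ℓ:ℝ) - x) + 1 := by ring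
    rw [this, add_pow, Finset.mul_sum]
    apply Finset.sum_congr rfl
    intro j hj
    ring
  rw [tsum_congr hB, Summable.tsum_finsetSum (fun j _ => (summable_main j hx).mul_left _)]
  have hC : ∀ j ∈ Finset.range (s+1),
      (∑' ℓ : ℕ, (s.choose j : ℝ) * (Real.exp (-x) * x ^ ℓ / ℓ.factorial * ((ℓ:ℝ) - x) ^ j))
      = (s.choose j : ℝ) * ∑' ℓ : ℕ, Real.exp (-x) * x ^ ℓ / ℓ.factorial * ((ℓ:ℝ) - x) ^ j :=
    fun j _ => tsum_mul_left
  rw [Finset.sum_congr rfl hC, Finset.sum_range_succ, Nat.choose_self]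
  push_cast
  ring


lemma q_eval : ∀ s, ∀ x : ℝ, 0 ≤ x →
    (q s).eval x = ∑' ℓ : ℕ, Real.exp (-x) * x ^ ℓ / ℓ.factorial * ((ℓ:ℝ) - x) ^ s := by
  intro s
  induction s using Nat.strong_induction_on with
  | _ s ih =>
    match s with
    | 0 => intro x hx; rw [f_zero]; simp [q]
    | s+1 =>
      intro x hx
      rw [q_succ, f_rec s hx]
      simp only [Polynomial.eval_mul, Polynomial.eval_X, Polynomial.eval_finset_sum,
        Polynomial.eval_smul, smul_eq_mul]
      congr 1
      apply Finset.sum_congr rfl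
      intro j hj
      rw [ih j (Nat.lt_succ_of_lt (Finset.mem_range.mp hj)) x hx]

end PoissonAux

theorem poisson_centered_moment_polynomial_degree
    (s : ℕ) (hs : 2 ≤ s) (p : Polynomial ℝ)
    (hp : ∀ x : ℝ, 0 ≤ x →
      p.eval x = ∑' ℓ : ℕ, Real.exp (-x) * x ^ ℓ / ℓ.factorial * ((ℓ : ℝ) - x) ^ s) :
    p.natDegree = s / 2
    ∧ ∀ m : ℕ, s = 2 * m → p.coeff m = (Nat.doubleFactorial (2 * m - 1) : ℝ) := by
  have heq : p = PoissonAux.q s := by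
    apply Polynomial.eq_of_infinite_eval_eq
    apply Set.Infinite.mono ?_ (Set.Ici_infinite (0:ℝ))
    intro x hx
    simp only [Set.mem_setOf_eq]
    rw [hp x hx, PoissonAux.q_eval s x hx]
  constructor
  · rw [heq]; exact PoissonAux.q_natDegree s hs
  · intro m hm
    rw [heq, hm]
    exact PoissonAux.q_coeff_even m
end

section
/- Let X be a nonnegative random variable with all moments finite, and for each ρ > 0 let Y_ρ be such that conditionally on X, Y_ρ ~ Poisson(ρX). Then for every m ≥ 0, E[(ρ^{-1/2}(Y_ρ − ρX))^{2m}] → (2m−1)!! E[X^m] and E[(ρ^{-1/2}(Y_ρ − ρX))^{2m+1}] → 0 as ρ → ∞. -/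
open MeasureTheory ProbabilityTheory Filter Real Finset

/-- `Y` is, conditionally on `X`, Poisson distributed with rate `ρ * X`. -/
def CondPoisson {Ω : Type*} [MeasurableSpace Ω] (μ : Measure Ω)
    (X : Ω → ℝ) (Y : Ω → ℕ) (ρ : ℝ) : Prop :=
  ∀ (ℓ : ℕ) (A : Set ℝ), MeasurableSet A →
    μ {ω | X ω ∈ A ∧ Y ω = ℓ}
      = ∫⁻ ω in {ω | X ω ∈ A},
          ENNReal.ofReal ((ρ * X ω) ^ ℓ * Real.exp (-(ρ * X ω)) / ℓ.factorial) ∂μ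


set_option linter.unusedSectionVars false
set_option linter.unusedVariables false
noncomputable section AuxQP

noncomputable def QP : ℕ → Polynomial ℝ
  | 0 => 1
  | (n+1) => Polynomial.X * ∑ k ∈ (Finset.range n).attach,
      ((n.choose k.1 : ℝ)) • QP k.1
decreasing_by exact lt_trans (Finset.mem_range.mp k.2) (Nat.lt_succ_self n)

lemma QP_zero : QP 0 = 1 := by rw [QP]

lemma QP_succ (n : ℕ) :
    QP (n+1) = Polynomial.X * ∑ k ∈ Finset.range n, ((n.choose k : ℝ)) • QP k := by
  rw [QP]
  congr 1
  exact Finset.sum_attach _ fun k => ((n.choose k : ℝ)) • QP k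

lemma QP_coeff_eq_zero : ∀ n j : ℕ, n < 2 * j → (QP n).coeff j = 0 := by
  intro n
  induction n using Nat.strong_induction_on with
  | _ n ih =>
    match n with
    | 0 => intro j hj; rw [QP_zero, Polynomial.coeff_one, if_neg (by omega)]
    | (n+1) =>
      intro j hj
      rw [QP_succ]
      match j with
      | 0 => simp at hj
      | (j+1) =>
        rw [Polynomial.coeff_X_mul, Polynomial.finset_sum_coeff]
        refine Finset.sum_eq_zero fun k hk => ?_
        have hk' := Finset.mem_range.mp hk
        rw [Polynomial.coeff_smul, ih k (lt_trans hk' (Nat.lt_succ_self n)) j (by omega), smul_zero]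

lemma QP_natDegree_lt (n m : ℕ) (h : n ≤ 2 * m + 1) : (QP n).natDegree < m + 1 := by
  rw [Nat.lt_succ_iff, Polynomial.natDegree_le_iff_coeff_eq_zero]
  intro j hj
  exact QP_coeff_eq_zero n j (by omega)

lemma QP_leading (m : ℕ) : (QP (2 * m)).coeff m = (Nat.doubleFactorial (2 * m - 1) : ℝ) := by
  induction m with
  | zero => simp [QP_zero]
  | succ m ih =>
    have h2 : 2 * (m + 1) = (2 * m + 1) + 1 := by ring
    rw [h2, QP_succ, Polynomial.coeff_X_mul, Polynomial.finset_sum_coeff]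
    have hsum : ∀ k ∈ Finset.range (2 * m + 1), k ≠ 2 * m →
        (((2 * m + 1).choose k : ℝ) • QP k).coeff m = 0 := by
      intro k hk hne
      have hk' := Finset.mem_range.mp hk
      rw [Polynomial.coeff_smul, QP_coeff_eq_zero k m (by omega), smul_zero]
    rw [Finset.sum_eq_single_of_mem (2 * m) (Finset.mem_range.mpr (by omega)) hsum]
    rw [Polynomial.coeff_smul, ih, Nat.choose_succ_self_right]
    have e3 : 2 * m + 1 + 1 - 1 = 2 * (m+1) - 1 := by omega
    rw [e3]
    have hdf : (Nat.doubleFactorial (2 * (m + 1) - 1) : ℝ)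
        = (2 * m + 1) * (Nat.doubleFactorial (2 * m - 1) : ℝ) := by
      cases m with
      | zero => norm_num [Nat.doubleFactorial]
      | succ m =>
        have e1 : 2 * (m + 1 + 1) - 1 = 2 * m + 1 + 2 := by omega
        have e2 : 2 * (m + 1) - 1 = 2 * m + 1 := by omega
        rw [e1, e2, Nat.doubleFactorial_add_two]
        push_cast
        ring
    rw [hdf, smul_eq_mul]
    push_cast
    ring

lemma master_summable (lam : ℝ) (hlam : 0 ≤ lam) (n a : ℕ) :
    Summable (fun ℓ : ℕ => (ℓ:ℝ)^a * |(ℓ:ℝ) - lam|^n * (lam^ℓ / ℓ.factorial)) := by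
  have hs : Summable (fun ℓ : ℕ => (1+lam)^n * (((2^(a+n):ℝ) * lam)^ℓ / ℓ.factorial)) :=
    (Real.summable_pow_div_factorial _).mul_left _
  refine Summable.of_nonneg_of_le (fun ℓ => by positivity) (fun ℓ => ?_) hs
  have h2 : (ℓ:ℝ) ≤ 2^ℓ := by
    exact_mod_cast (Nat.lt_two_pow_self (n := ℓ)).le
  have hfac : (0:ℝ) ≤ lam^ℓ / ℓ.factorial := by positivity
  have h1 : (ℓ:ℝ)^a ≤ ((2:ℝ)^a)^ℓ := by
    rw [← pow_mul, mul_comm a ℓ, pow_mul]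
    exact pow_le_pow_left₀ (Nat.cast_nonneg ℓ) h2 a
  have h3 : |(ℓ:ℝ) - lam|^n ≤ (1+lam)^n * ((2:ℝ)^n)^ℓ := by
    rw [← pow_mul, mul_comm n ℓ, pow_mul, ← mul_pow]
    refine pow_le_pow_left₀ (abs_nonneg _) ?_ n
    have : |(ℓ:ℝ) - lam| ≤ (ℓ:ℝ) + lam := by
      rw [abs_sub_le_iff]; constructor <;> nlinarith [Nat.cast_nonneg (α := ℝ) ℓ]
    refine this.trans ?_
    have h2ℓ : (1:ℝ) ≤ 2^ℓ := one_le_pow₀ (by norm_num)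
    nlinarith
  calc (ℓ:ℝ)^a * |(ℓ:ℝ) - lam|^n * (lam^ℓ / ℓ.factorial)
      ≤ ((2:ℝ)^a)^ℓ * ((1+lam)^n * ((2:ℝ)^n)^ℓ) * (lam^ℓ / ℓ.factorial) := by
        apply mul_le_mul_of_nonneg_right _ hfac
        exact mul_le_mul h1 h3 (pow_nonneg (abs_nonneg _) n) (by positivity)
    _ = (1+lam)^n * (((2^(a+n):ℝ) * lam)^ℓ / ℓ.factorial) := by
        rw [pow_add, mul_pow, mul_pow]
        field_simp

lemma summable_centered (lam : ℝ) (hlam : 0 ≤ lam) (n : ℕ) :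
    Summable (fun ℓ : ℕ => ((ℓ:ℝ) - lam)^n * (lam^ℓ / ℓ.factorial)) := by
  refine Summable.of_abs ?_
  have := master_summable lam hlam n 0
  simp only [pow_zero, one_mul] at this
  refine this.congr fun ℓ => ?_
  rw [abs_mul, abs_pow, abs_of_nonneg (by positivity : (0:ℝ) ≤ lam^ℓ / ℓ.factorial)]

lemma summable_abs_centered (lam : ℝ) (hlam : 0 ≤ lam) (n : ℕ) :
    Summable (fun ℓ : ℕ => |(ℓ:ℝ) - lam|^n * (lam^ℓ / ℓ.factorial)) := by
  have := master_summable lam hlam n 0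
  simpa using this

lemma summable_mul_centered (lam : ℝ) (hlam : 0 ≤ lam) (n : ℕ) :
    Summable (fun ℓ : ℕ => (ℓ:ℝ) * ((ℓ:ℝ) - lam)^n * (lam^ℓ / ℓ.factorial)) := by
  refine Summable.of_abs ?_
  have := master_summable lam hlam n 1
  simp only [pow_one] at this
  refine this.congr fun ℓ => ?_
  rw [abs_mul, abs_mul, abs_pow, abs_of_nonneg (show (0:ℝ) ≤ (ℓ:ℝ) from Nat.cast_nonneg ℓ),
    abs_of_nonneg (by positivity : (0:ℝ) ≤ lam^ℓ / ℓ.factorial)]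

lemma QP_hasSum : ∀ n : ℕ, ∀ lam : ℝ, 0 ≤ lam →
    HasSum (fun ℓ : ℕ => ((ℓ:ℝ) - lam)^n * (lam^ℓ / ℓ.factorial))
      ((QP n).eval lam * Real.exp lam) := by
  intro n
  induction n using Nat.strong_induction_on with
  | _ n ih =>
    match n with
    | 0 =>
      intro lam hlam
      simp only [pow_zero, one_mul, QP_zero, Polynomial.eval_one]
      rw [Real.exp_eq_exp_ℝ]
      exact NormedSpace.expSeries_div_hasSum_exp lam
    | (n+1) =>
      intro lam hlam
      -- step 1: shifted sum
      have hshift : HasSum (fun j : ℕ => (((j:ℝ)+1) - lam)^n * (lam^j / j.factorial))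
          (∑ k ∈ Finset.range (n+1), (n.choose k : ℝ) * ((QP k).eval lam * Real.exp lam)) := by
        have h1 : ∀ j : ℕ, (((j:ℝ)+1) - lam)^n * (lam^j / j.factorial)
            = ∑ k ∈ Finset.range (n+1),
                (n.choose k : ℝ) * (((j:ℝ) - lam)^k * (lam^j / j.factorial)) := by
          intro j
          have : (((j:ℝ)+1) - lam) = ((j:ℝ) - lam) + 1 := by ring
          rw [this, add_pow]
          rw [Finset.sum_mul]
          refine Finset.sum_congr rfl fun k hk => ?_
          ring
        have hs2 : HasSum (fun j : ℕ => ∑ k ∈ Finset.range (n+1),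
            (n.choose k : ℝ) * (((j:ℝ) - lam)^k * (lam^j / j.factorial)))
            (∑ k ∈ Finset.range (n+1), (n.choose k : ℝ) * ((QP k).eval lam * Real.exp lam)) :=
          hasSum_sum fun k hk =>
            (ih k (Finset.mem_range.mp hk) lam hlam).mul_left _
        exact hs2.congr_fun h1
      -- step 2: b
      set b : ℕ → ℝ := fun ℓ => (ℓ:ℝ) * (((ℓ:ℝ) - lam)^n * (lam^ℓ / ℓ.factorial)) with hb
      have hbsucc : ∀ j : ℕ, b (j+1)
          = lam * ((((j:ℝ)+1) - lam)^n * (lam^j / j.factorial)) := by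
        intro j
        have hfac : ((j+1).factorial : ℝ) = ((j:ℝ)+1) * j.factorial := by
          rw [Nat.factorial_succ]; push_cast; ring
        simp only [hb, Nat.cast_succ, hfac, pow_succ]
        have hj : ((j.factorial : ℝ)) ≠ 0 := by positivity
        field_simp
      have hbsum : HasSum b (lam * ∑ k ∈ Finset.range (n+1),
          (n.choose k : ℝ) * ((QP k).eval lam * Real.exp lam)) := by
        have h2 : HasSum (fun j => b (j+1)) (lam * ∑ k ∈ Finset.range (n+1),
            (n.choose k : ℝ) * ((QP k).eval lam * Real.exp lam)) := by
          exact HasSum.congr_fun (hshift.mul_left lam) hbsucc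
        have := (hasSum_nat_add_iff (f := b) 1).mp h2
        simpa [hb] using this
      -- step 3
      have hmain : HasSum (fun ℓ : ℕ => ((ℓ:ℝ) - lam)^(n+1) * (lam^ℓ / ℓ.factorial))
          ((lam * ∑ k ∈ Finset.range (n+1),
            (n.choose k : ℝ) * ((QP k).eval lam * Real.exp lam))
           - lam * ((QP n).eval lam * Real.exp lam)) := by
        refine HasSum.congr_fun (hbsum.sub ((ih n (Nat.lt_succ_self n) lam hlam).mul_left lam))
          (fun ℓ => ?_)
        simp only [hb]
        ring
      convert hmain using 1
      rw [QP_succ, Polynomial.eval_mul, Polynomial.eval_X, Polynomial.eval_finset_sum]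
      simp only [Polynomial.eval_smul, smul_eq_mul]
      have hfac : ∑ x ∈ Finset.range (n+1), (n.choose x : ℝ) * (Polynomial.eval lam (QP x) * Real.exp lam)
          = (∑ x ∈ Finset.range (n+1), (n.choose x : ℝ) * Polynomial.eval lam (QP x)) * Real.exp lam := by
        rw [Finset.sum_mul]
        exact Finset.sum_congr rfl fun x _ => by ring
      rw [hfac, Finset.sum_range_succ, Nat.choose_self, Nat.cast_one, one_mul]
      ring

lemma QP_hasSum_pmf (n : ℕ) (lam : ℝ) (hlam : 0 ≤ lam) :
    HasSum (fun ℓ : ℕ => ((ℓ:ℝ) - lam)^n * (lam^ℓ * Real.exp (-lam) / ℓ.factorial))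
      ((QP n).eval lam) := by
  have h := (QP_hasSum n lam hlam).mul_right (Real.exp (-lam))
  have hval : (QP n).eval lam * Real.exp lam * Real.exp (-lam) = (QP n).eval lam := by
    rw [mul_assoc, ← Real.exp_add]; simp
  rw [hval] at h
  refine h.congr_fun fun ℓ => ?_
  ring

lemma absPowLeOneAdd (t : ℝ) (n : ℕ) : |t|^n ≤ 1 + t^(2*n) := by
  have h2n : t^(2*n) = |t|^(2*n) := by
    rw [pow_mul, pow_mul, sq_abs]
  rcases le_or_gt |t| 1 with h | h
  · have : |t|^n ≤ 1 := pow_le_one₀ (abs_nonneg t) h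
    nlinarith [pow_nonneg (abs_nonneg t) (2*n)]
  · have : |t|^n ≤ |t|^(2*n) := pow_le_pow_right₀ h.le (by omega)
    nlinarith

lemma summable_abs_pmf (n : ℕ) (lam : ℝ) (hlam : 0 ≤ lam) :
    Summable (fun ℓ : ℕ => |(ℓ:ℝ) - lam|^n * (lam^ℓ * Real.exp (-lam) / ℓ.factorial)) := by
  have := (summable_abs_centered lam hlam n).mul_right (Real.exp (-lam))
  refine this.congr fun ℓ => ?_
  ring

lemma tsum_abs_pmf_le (n : ℕ) (lam : ℝ) (hlam : 0 ≤ lam) :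
    ∑' ℓ : ℕ, |(ℓ:ℝ) - lam|^n * (lam^ℓ * Real.exp (-lam) / ℓ.factorial)
      ≤ 1 + (QP (2*n)).eval lam := by
  have hbig : HasSum (fun ℓ : ℕ => (1 + ((ℓ:ℝ) - lam)^(2*n)) * (lam^ℓ * Real.exp (-lam) / ℓ.factorial))
      (1 + (QP (2*n)).eval lam) := by
    have h0 := QP_hasSum_pmf 0 lam hlam
    simp only [pow_zero, one_mul, QP_zero, Polynomial.eval_one] at h0
    have h2 := QP_hasSum_pmf (2*n) lam hlam
    refine (h0.add h2).congr_fun fun ℓ => ?_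
    ring
  refine le_of_le_of_eq (Summable.tsum_le_tsum (fun ℓ => ?_) (summable_abs_pmf n lam hlam) hbig.summable)
    hbig.tsum_eq
  have hpmf : (0:ℝ) ≤ lam^ℓ * Real.exp (-lam) / ℓ.factorial := by positivity
  exact mul_le_mul_of_nonneg_right (absPowLeOneAdd _ n) hpmf


noncomputable def pmfR (ρ : ℝ) (ℓ : ℕ) (x : ℝ) : ℝ :=
  (ρ * x) ^ ℓ * Real.exp (-(ρ * x)) / ℓ.factorial

lemma pmfR_nonneg {ρ x : ℝ} (h : 0 ≤ ρ * x) (ℓ : ℕ) : 0 ≤ pmfR ρ ℓ x := by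
  unfold pmfR; positivity

section Meas

set_option linter.unusedSectionVars false
set_option linter.unusedVariables false
variable {Ω : Type*} [MeasurableSpace Ω] {μ : Measure Ω} [IsProbabilityMeasure μ]
  {X : Ω → ℝ} {Y : Ω → ℕ} {ρ : ℝ}

lemma measurable_pmfR (hX : Measurable X) (ρ : ℝ) (ℓ : ℕ) :
    Measurable fun ω => pmfR ρ ℓ (X ω) := by
  unfold pmfR
  exact (((measurable_const.mul hX).pow_const ℓ).mul
    ((measurable_const.mul hX).neg.exp)).div_const _

lemma pmfMapEq (hX : Measurable X) (hY : Measurable Y) (hc : CondPoisson μ X Y ρ) (ℓ : ℕ) :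
    Measure.map X (μ.restrict {ω | Y ω = ℓ})
      = Measure.map X (μ.withDensity fun ω => ENNReal.ofReal (pmfR ρ ℓ (X ω))) := by
  ext A hA
  rw [Measure.map_apply hX hA, Measure.map_apply hX hA,
    Measure.restrict_apply (hX hA), withDensity_apply _ (hX hA)]
  have h := hc ℓ A hA
  have hs1 : {ω | X ω ∈ A ∧ Y ω = ℓ} = X ⁻¹' A ∩ {ω | Y ω = ℓ} := rfl
  have hs2 : {ω | X ω ∈ A} = X ⁻¹' A := rfl
  rw [hs1, hs2] at h
  exact h

lemma pmfSetLIntegralEq (hX : Measurable X) (hY : Measurable Y) (hc : CondPoisson μ X Y ρ)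
    (ℓ : ℕ) (G : ℝ → ENNReal) (hG : Measurable G) :
    ∫⁻ ω in {ω | Y ω = ℓ}, G (X ω) ∂μ
      = ∫⁻ ω, ENNReal.ofReal (pmfR ρ ℓ (X ω)) * G (X ω) ∂μ := by
  have hd : Measurable fun ω => ENNReal.ofReal (pmfR ρ ℓ (X ω)) :=
    (measurable_pmfR hX ρ ℓ).ennreal_ofReal
  calc ∫⁻ ω in {ω | Y ω = ℓ}, G (X ω) ∂μ
      = ∫⁻ x, G x ∂(Measure.map X (μ.restrict {ω | Y ω = ℓ})) :=
        (lintegral_map hG hX).symm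
    _ = ∫⁻ x, G x ∂(Measure.map X (μ.withDensity fun ω => ENNReal.ofReal (pmfR ρ ℓ (X ω)))) := by
        rw [pmfMapEq hX hY hc]
    _ = ∫⁻ ω, G (X ω) ∂(μ.withDensity fun ω => ENNReal.ofReal (pmfR ρ ℓ (X ω))) :=
        lintegral_map hG hX
    _ = ∫⁻ ω, ENNReal.ofReal (pmfR ρ ℓ (X ω)) * G (X ω) ∂μ := by
        rw [lintegral_withDensity_eq_lintegral_mul μ hd (g := fun ω => G (X ω)) (hG.comp hX)]
        rfl

lemma pmfSetIntegralEq (hX : Measurable X) (hY : Measurable Y) (hc : CondPoisson μ X Y ρ)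
    (hXnn : ∀ ω, 0 ≤ X ω) (hρ : 0 ≤ ρ)
    (ℓ : ℕ) (F : ℝ → ℝ) (hF : Measurable F) :
    ∫ ω in {ω | Y ω = ℓ}, F (X ω) ∂μ
      = ∫ ω, pmfR ρ ℓ (X ω) * F (X ω) ∂μ := by
  have hnn : ∀ ω, 0 ≤ pmfR ρ ℓ (X ω) := fun ω =>
    pmfR_nonneg (mul_nonneg hρ (hXnn ω)) ℓ
  have hd : Measurable fun ω => (pmfR ρ ℓ (X ω)).toNNReal :=
    (measurable_pmfR hX ρ ℓ).real_toNNReal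
  have hdens : (fun ω => ENNReal.ofReal (pmfR ρ ℓ (X ω)))
      = fun ω => ((pmfR ρ ℓ (X ω)).toNNReal : ENNReal) := rfl
  calc ∫ ω in {ω | Y ω = ℓ}, F (X ω) ∂μ
      = ∫ x, F x ∂(Measure.map X (μ.restrict {ω | Y ω = ℓ})) :=
        (integral_map hX.aemeasurable hF.aestronglyMeasurable).symm
    _ = ∫ x, F x ∂(Measure.map X (μ.withDensity fun ω => ENNReal.ofReal (pmfR ρ ℓ (X ω)))) := by
        rw [pmfMapEq hX hY hc]
    _ = ∫ ω, F (X ω) ∂(μ.withDensity fun ω => ENNReal.ofReal (pmfR ρ ℓ (X ω))) :=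
        integral_map hX.aemeasurable hF.aestronglyMeasurable
    _ = ∫ ω, (pmfR ρ ℓ (X ω)).toNNReal • F (X ω) ∂μ := by
        rw [hdens, integral_withDensity_eq_integral_smul hd]
    _ = ∫ ω, pmfR ρ ℓ (X ω) * F (X ω) ∂μ := by
        refine integral_congr_ae (Filter.EventuallyEq.of_eq (funext fun ω => ?_))
        rw [NNReal.smul_def, smul_eq_mul, Real.coe_toNNReal _ (hnn ω)]


lemma integrable_polyX (hmom : ∀ s : ℕ, Integrable (fun ω => X ω ^ s) μ)
    (p : Polynomial ℝ) (c : ℝ) :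
    Integrable (fun ω => p.eval (c * X ω)) μ := by
  have h : (fun ω => p.eval (c * X ω))
      = fun ω => ∑ j ∈ Finset.range (p.natDegree + 1), p.coeff j * c ^ j * X ω ^ j := by
    funext ω
    rw [Polynomial.eval_eq_sum_range]
    exact Finset.sum_congr rfl fun j _ => by rw [mul_pow]; ring
  rw [h]
  exact integrable_finset_sum _ fun j _ => ((hmom j).const_mul _)

lemma key_identity (hX : Measurable X) (hY : Measurable Y) (hXnn : ∀ ω, 0 ≤ X ω)
    (hmom : ∀ s : ℕ, Integrable (fun ω => X ω ^ s) μ)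
    (hρ : 0 < ρ) (hc : CondPoisson μ X Y ρ) (n : ℕ) :
    Integrable (fun ω => ((Y ω : ℝ) - ρ * X ω) ^ n) μ ∧
    ∫ ω, ((Y ω : ℝ) - ρ * X ω) ^ n ∂μ = ∫ ω, (QP n).eval (ρ * X ω) ∂μ := by
  have hlam : ∀ ω, 0 ≤ ρ * X ω := fun ω => mul_nonneg hρ.le (hXnn ω)
  have hYc : Measurable fun ω => (Y ω : ℝ) := measurable_from_nat.comp hY
  have hfmeas : Measurable fun ω => ((Y ω : ℝ) - ρ * X ω) ^ n :=
    (hYc.sub (measurable_const.mul hX)).pow_const n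
  set s : ℕ → Set Ω := fun ℓ => {ω | Y ω = ℓ} with hs
  have hm : ∀ ℓ, MeasurableSet (s ℓ) := fun ℓ => hY (measurableSet_singleton ℓ)
  have hdisj : Pairwise (Function.onFun Disjoint s) := by
    intro i j hij
    refine Set.disjoint_left.mpr fun ω h1 h2 => ?_
    exact hij ((h1 : Y ω = i).symm.trans (h2 : Y ω = j))
  have hunion : (⋃ ℓ, s ℓ) = Set.univ := by
    ext ω; simp [hs]
  -- integrable bound
  have hQint : Integrable (fun ω => 1 + (QP (2 * n)).eval (ρ * X ω)) μ :=
    (integrable_const 1).add (integrable_polyX hmom _ ρ)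
  have hBlt : ∫⁻ ω, ENNReal.ofReal (1 + (QP (2 * n)).eval (ρ * X ω)) ∂μ < ⊤ :=
    hQint.lintegral_lt_top
  have hgmeas : ∀ ℓ : ℕ, Measurable fun ω =>
      pmfR ρ ℓ (X ω) * |(ℓ : ℝ) - ρ * X ω| ^ n := fun ℓ =>
    (measurable_pmfR hX ρ ℓ).mul
      ((measurable_const.sub (measurable_const.mul hX)).abs.pow_const n)
  have h1 : ∀ ℓ : ℕ, ∫⁻ ω in s ℓ, ENNReal.ofReal (|(Y ω : ℝ) - ρ * X ω| ^ n) ∂μ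
      = ∫⁻ ω, ENNReal.ofReal (pmfR ρ ℓ (X ω) * |(ℓ : ℝ) - ρ * X ω| ^ n) ∂μ := by
    intro ℓ
    have hGm : Measurable fun x : ℝ => ENNReal.ofReal (|(ℓ : ℝ) - ρ * x| ^ n) :=
      ((measurable_const.sub (measurable_const.mul measurable_id)).abs.pow_const n).ennreal_ofReal
    have hcg : ∫⁻ ω in s ℓ, ENNReal.ofReal (|(Y ω : ℝ) - ρ * X ω| ^ n) ∂μ
        = ∫⁻ ω in s ℓ, ENNReal.ofReal (|(ℓ : ℝ) - ρ * X ω| ^ n) ∂μ := by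
      refine setLIntegral_congr_fun (hm ℓ) (fun ω hω => ?_)
      rw [show Y ω = ℓ from hω]
    rw [hcg, pmfSetLIntegralEq hX hY hc ℓ _ hGm]
    congr 1
    funext ω
    rw [← ENNReal.ofReal_mul (pmfR_nonneg (hlam ω) ℓ)]
  have hsum_lint : ∫⁻ ω, ENNReal.ofReal (|(Y ω : ℝ) - ρ * X ω| ^ n) ∂μ
      = ∑' ℓ : ℕ, ∫⁻ ω, ENNReal.ofReal (pmfR ρ ℓ (X ω) * |(ℓ : ℝ) - ρ * X ω| ^ n) ∂μ := by
    rw [← setLIntegral_univ, ← hunion, lintegral_iUnion hm hdisj]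
    exact tsum_congr h1
  have hsummable : ∀ ω, Summable fun ℓ : ℕ =>
      pmfR ρ ℓ (X ω) * |(ℓ : ℝ) - ρ * X ω| ^ n := by
    intro ω
    refine (summable_abs_pmf n (ρ * X ω) (hlam ω)).congr fun ℓ => ?_
    unfold pmfR
    ring
  have hpt : ∀ ω, (∑' ℓ : ℕ, ENNReal.ofReal (pmfR ρ ℓ (X ω) * |(ℓ : ℝ) - ρ * X ω| ^ n))
      ≤ ENNReal.ofReal (1 + (QP (2 * n)).eval (ρ * X ω)) := by
    intro ω
    rw [← ENNReal.ofReal_tsum_of_nonneg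
      (fun ℓ => mul_nonneg (pmfR_nonneg (hlam ω) ℓ) (by positivity)) (hsummable ω)]
    apply ENNReal.ofReal_le_ofReal
    refine le_trans (le_of_eq (tsum_congr fun ℓ => ?_)) (tsum_abs_pmf_le n (ρ * X ω) (hlam ω))
    unfold pmfR
    ring
  have hfin : (∑' ℓ : ℕ, ∫⁻ ω, ENNReal.ofReal (pmfR ρ ℓ (X ω) * |(ℓ : ℝ) - ρ * X ω| ^ n) ∂μ) ≠ ⊤ := by
    rw [← lintegral_tsum fun ℓ => ((hgmeas ℓ).ennreal_ofReal).aemeasurable]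
    exact ((lintegral_mono hpt).trans_lt hBlt).ne
  have hint : Integrable (fun ω => ((Y ω : ℝ) - ρ * X ω) ^ n) μ := by
    refine ⟨hfmeas.aestronglyMeasurable, ?_⟩
    rw [hasFiniteIntegral_iff_norm]
    have : ∀ ω, ‖((Y ω : ℝ) - ρ * X ω) ^ n‖ = |(Y ω : ℝ) - ρ * X ω| ^ n := fun ω => by
      rw [Real.norm_eq_abs, abs_pow]
    simp_rw [this, hsum_lint]
    exact lt_top_iff_ne_top.mpr hfin
  refine ⟨hint, ?_⟩
  have hnrm : ∀ ℓ : ℕ, ∫⁻ ω, ‖pmfR ρ ℓ (X ω) * ((ℓ : ℝ) - ρ * X ω) ^ n‖ₑ ∂μ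
      = ∫⁻ ω, ENNReal.ofReal (pmfR ρ ℓ (X ω) * |(ℓ : ℝ) - ρ * X ω| ^ n) ∂μ := by
    intro ℓ
    congr 1
    funext ω
    rw [← ofReal_norm, Real.norm_eq_abs, abs_mul, abs_pow,
      abs_of_nonneg (pmfR_nonneg (hlam ω) ℓ)]
  calc ∫ ω, ((Y ω : ℝ) - ρ * X ω) ^ n ∂μ
      = ∫ ω in ⋃ ℓ, s ℓ, ((Y ω : ℝ) - ρ * X ω) ^ n ∂μ := by rw [hunion, setIntegral_univ]
    _ = ∑' ℓ : ℕ, ∫ ω in s ℓ, ((Y ω : ℝ) - ρ * X ω) ^ n ∂μ :=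
        integral_iUnion hm hdisj (hunion ▸ hint.integrableOn)
    _ = ∑' ℓ : ℕ, ∫ ω, pmfR ρ ℓ (X ω) * ((ℓ : ℝ) - ρ * X ω) ^ n ∂μ := by
        refine tsum_congr fun ℓ => ?_
        have hcg : ∫ ω in s ℓ, ((Y ω : ℝ) - ρ * X ω) ^ n ∂μ
            = ∫ ω in s ℓ, ((ℓ : ℝ) - ρ * X ω) ^ n ∂μ :=
          setIntegral_congr_fun (hm ℓ) fun ω hω => by rw [show Y ω = ℓ from hω]
        rw [hcg]
        exact pmfSetIntegralEq hX hY hc hXnn hρ.le ℓ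
          (fun x => ((ℓ : ℝ) - ρ * x) ^ n)
          ((measurable_const.sub (measurable_const.mul measurable_id)).pow_const n)
    _ = ∫ ω, (∑' ℓ : ℕ, pmfR ρ ℓ (X ω) * ((ℓ : ℝ) - ρ * X ω) ^ n) ∂μ := by
        refine (integral_tsum (fun ℓ => ?_) ?_).symm
        · exact ((measurable_pmfR hX ρ ℓ).mul
            ((measurable_const.sub (measurable_const.mul hX)).pow_const n)).aestronglyMeasurable
        · simp_rw [hnrm]
          exact hfin
    _ = ∫ ω, (QP n).eval (ρ * X ω) ∂μ := by
        refine integral_congr_ae (Filter.Eventually.of_forall fun ω => ?_)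
        show (∑' ℓ : ℕ, pmfR ρ ℓ (X ω) * ((ℓ : ℝ) - ρ * X ω) ^ n) = (QP n).eval (ρ * X ω)
        have hHS := QP_hasSum_pmf n (ρ * X ω) (hlam ω)
        rw [← hHS.tsum_eq]
        refine tsum_congr fun ℓ => ?_
        unfold pmfR
        ring

end Meas


end AuxQP

theorem condPoisson_clt_moment_convergence
    {Ω : Type*} [MeasurableSpace Ω] (μ : Measure Ω) [IsProbabilityMeasure μ]
    (X : Ω → ℝ) (Y : ℝ → Ω → ℕ)
    (hX : Measurable X) (hY : ∀ ρ, Measurable (Y ρ)) (hXnn : ∀ ω, 0 ≤ X ω)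
    (hmom : ∀ s : ℕ, Integrable (fun ω => X ω ^ s) μ)
    (hcond : ∀ ρ > (0:ℝ), CondPoisson μ X (Y ρ) ρ) (m : ℕ) :
    Tendsto
        (fun ρ : ℝ => ∫ ω, (((Y ρ ω : ℝ) - ρ * X ω) / Real.sqrt ρ) ^ (2 * m) ∂μ)
        atTop (nhds ((Nat.doubleFactorial (2 * m - 1) : ℝ) * ∫ ω, X ω ^ m ∂μ))
    ∧ Tendsto
        (fun ρ : ℝ => ∫ ω, (((Y ρ ω : ℝ) - ρ * X ω) / Real.sqrt ρ) ^ (2 * m + 1) ∂μ)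
        atTop (nhds 0) := by
  have key : ∀ (n : ℕ), n ≤ 2 * m + 1 →
      Tendsto (fun ρ : ℝ => ∫ ω, (((Y ρ ω : ℝ) - ρ * X ω) / Real.sqrt ρ) ^ n ∂μ) atTop
        (nhds (∑ j ∈ Finset.range (m+1),
          if 2*j = n then (QP n).coeff j * (∫ ω, X ω ^ j ∂μ) else 0)) := by
    intro n hdeg
    have hT : ∀ j ∈ Finset.range (m+1),
        Tendsto (fun ρ : ℝ => (QP n).coeff j * (∫ ω, X ω ^ j ∂μ) * ρ ^ ((j:ℝ) - (n:ℝ)/2))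
          atTop (nhds (if 2*j = n then (QP n).coeff j * (∫ ω, X ω ^ j ∂μ) else 0)) := by
      intro j _
      rcases lt_trichotomy (2*j) n with h | h | h
      · rw [if_neg (by omega)]
        have hexp : (0:ℝ) < (n:ℝ)/2 - (j:ℝ) := by
          have h' : (2*(j:ℝ)) < (n:ℝ) := by exact_mod_cast h
          linarith
        have ht := (tendsto_rpow_neg_atTop hexp).const_mul
          ((QP n).coeff j * (∫ ω, X ω ^ j ∂μ))
        rw [mul_zero] at ht
        refine ht.congr fun ρ => ?_
        rw [neg_sub]
      · rw [if_pos h]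
        have hexp : (j:ℝ) - (n:ℝ)/2 = 0 := by
          have h' : (2*(j:ℝ)) = (n:ℝ) := by exact_mod_cast h
          linarith
        rw [hexp]
        simp only [Real.rpow_zero, mul_one]
        exact tendsto_const_nhds
      · rw [if_neg (by omega), QP_coeff_eq_zero n j h]
        simp only [zero_mul]
        exact tendsto_const_nhds
    have hsum := tendsto_finset_sum (Finset.range (m+1)) hT
    refine hsum.congr' ?_
    filter_upwards [eventually_gt_atTop (0:ℝ)] with ρ hρ
    have hs : (0:ℝ) < Real.sqrt ρ := Real.sqrt_pos.mpr hρ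
    have hkey := key_identity hX (hY ρ) hXnn hmom hρ (hcond ρ hρ) n
    have hpow : (Real.sqrt ρ) ^ n = ρ ^ ((n:ℝ)/2) := by
      rw [Real.sqrt_eq_rpow, ← Real.rpow_natCast (ρ ^ ((1:ℝ)/2)) n,
        ← Real.rpow_mul hρ.le]
      congr 1
      ring
    have hrpow : ∀ j : ℕ, ρ ^ ((j:ℝ) - (n:ℝ)/2) = ρ ^ j / (Real.sqrt ρ) ^ n := by
      intro j
      rw [Real.rpow_sub hρ, Real.rpow_natCast, hpow]
    have hdg : (QP n).natDegree < m + 1 := QP_natDegree_lt n m hdeg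
    have hexp : ∫ ω, (QP n).eval (ρ * X ω) ∂μ
        = ∑ j ∈ Finset.range (m+1), (QP n).coeff j * ρ^j * ∫ ω, X ω ^ j ∂μ := by
      have h1 : (fun ω => (QP n).eval (ρ * X ω))
          = fun ω => ∑ j ∈ Finset.range (m+1), (QP n).coeff j * ρ^j * X ω ^ j := by
        funext ω
        rw [Polynomial.eval_eq_sum_range' hdg]
        exact Finset.sum_congr rfl fun j _ => by rw [mul_pow]; ring
      rw [h1, integral_finset_sum _ fun j _ => ((hmom j).const_mul _)]
      exact Finset.sum_congr rfl fun j _ => integral_const_mul _ _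
    calc ∑ j ∈ Finset.range (m+1),
          (QP n).coeff j * (∫ ω, X ω ^ j ∂μ) * ρ ^ ((j:ℝ) - (n:ℝ)/2)
        = (∑ j ∈ Finset.range (m+1), (QP n).coeff j * ρ^j * ∫ ω, X ω ^ j ∂μ)
            * ((Real.sqrt ρ) ^ n)⁻¹ := by
          rw [Finset.sum_mul]
          refine Finset.sum_congr rfl fun j _ => ?_
          rw [hrpow j]
          field_simp
      _ = (∫ ω, ((Y ρ ω : ℝ) - ρ * X ω) ^ n ∂μ) * ((Real.sqrt ρ) ^ n)⁻¹ := by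
          rw [← hexp, hkey.2]
      _ = ∫ ω, (((Y ρ ω : ℝ) - ρ * X ω) / Real.sqrt ρ) ^ n ∂μ := by
          rw [← integral_mul_const]
          refine integral_congr_ae (Filter.Eventually.of_forall fun ω => ?_)
          show ((Y ρ ω : ℝ) - ρ * X ω) ^ n * ((Real.sqrt ρ) ^ n)⁻¹
            = (((Y ρ ω : ℝ) - ρ * X ω) / Real.sqrt ρ) ^ n
          rw [div_pow, div_eq_mul_inv]
  constructor
  · have h := key (2*m) (by omega)
    have hval : (∑ j ∈ Finset.range (m+1),
        if 2*j = 2*m then (QP (2*m)).coeff j * (∫ ω, X ω ^ j ∂μ) else 0)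
        = (Nat.doubleFactorial (2 * m - 1) : ℝ) * ∫ ω, X ω ^ m ∂μ := by
      rw [Finset.sum_eq_single_of_mem m (Finset.mem_range.mpr (by omega))
        (fun j _ hj => if_neg (by omega))]
      rw [if_pos rfl, QP_leading]
    rwa [hval] at h
  · have h := key (2*m+1) le_rfl
    have hval : (∑ j ∈ Finset.range (m+1),
        if 2*j = 2*m+1 then (QP (2*m+1)).coeff j * (∫ ω, X ω ^ j ∂μ) else 0) = 0 :=
      Finset.sum_eq_zero fun j _ => if_neg (by omega)
    rwa [hval] at h
end

section
/- Let X be a bounded nonnegative random variable and for each ρ > 0 let Y_ρ be such that conditionally on X, Y_ρ ~ Poisson(ρX). Then for every real t, E[exp(t √ρ (Y_ρ/ρ − X))] → E[exp(t^2 X / 2)] as ρ → ∞. -/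
open MeasureTheory ProbabilityTheory Filter Real Finset

lemma my_hterm (u x c : ℝ) : ∀ ℓ : ℕ,
    Real.exp (u * ℓ) * Real.exp c * (x ^ ℓ * Real.exp (-x) / ℓ.factorial)
      = (x * Real.exp u) ^ ℓ / ℓ.factorial * (Real.exp c * Real.exp (-x)) := by
  intro ℓ
  rw [mul_comm u (ℓ:ℝ), Real.exp_nat_mul, mul_pow]
  ring

lemma my_summable (u x c : ℝ) :
    Summable fun ℓ : ℕ => Real.exp (u * ℓ) * Real.exp c * (x ^ ℓ * Real.exp (-x) / ℓ.factorial) :=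
  ((Real.summable_pow_div_factorial (x * Real.exp u)).mul_right _).congr
    fun ℓ => (my_hterm u x c ℓ).symm

lemma my_tsum (u x c : ℝ) :
    ∑' ℓ : ℕ, Real.exp (u * ℓ) * Real.exp c * (x ^ ℓ * Real.exp (-x) / ℓ.factorial)
      = Real.exp (x * (Real.exp u - 1) + c) := by
  rw [tsum_congr (my_hterm u x c), tsum_mul_right]
  have h : ∑' ℓ : ℕ, (x * Real.exp u) ^ ℓ / ℓ.factorial = Real.exp (x * Real.exp u) := by
    rw [Real.exp_eq_exp_ℝ, NormedSpace.exp_eq_tsum_div]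
  rw [h, ← Real.exp_add, ← Real.exp_add]
  ring_nf

lemma my_cube {x : ℝ} (hx : |x| ≤ 1) :
    |Real.exp x - (1 + x + x ^ 2 / 2)| ≤ |x| ^ 3 := by
  have h := Real.exp_bound hx (n := 3) (by norm_num)
  have hs : ∑ m ∈ range 3, x ^ m / m.factorial = 1 + x + x ^ 2 / 2 := by
    norm_num [Finset.sum_range_succ, Nat.factorial]
  rw [hs] at h
  refine h.trans ?_
  have : ((3:ℕ).succ / ((3:ℕ).factorial * (3:ℕ)) : ℝ) ≤ 1 := by norm_num [Nat.factorial]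
  calc |x| ^ 3 * ((3:ℕ).succ / ((3:ℕ).factorial * (3:ℕ)) : ℝ) ≤ |x| ^ 3 * 1 :=
        mul_le_mul_of_nonneg_left this (by positivity)
    _ = |x| ^ 3 := mul_one _

lemma my_glim (t : ℝ) :
    Tendsto (fun ρ : ℝ => ρ * (Real.exp (t / Real.sqrt ρ) - 1) - t * Real.sqrt ρ)
      atTop (nhds (t ^ 2 / 2)) := by
  rw [← tendsto_sub_nhds_zero_iff]
  apply squeeze_zero_norm' (a := fun ρ : ℝ => |t| ^ 3 / Real.sqrt ρ)
  · filter_upwards [eventually_ge_atTop (max 1 (t^2))] with ρ hρ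
    have hρ1 : (1:ℝ) ≤ ρ := le_trans (le_max_left _ _) hρ
    have hρ0 : (0:ℝ) < ρ := by linarith
    have hs0 : 0 < Real.sqrt ρ := Real.sqrt_pos.2 hρ0
    have hsq : Real.sqrt ρ * Real.sqrt ρ = ρ := Real.mul_self_sqrt hρ0.le
    set s := Real.sqrt ρ
    set v := t / s with hv
    have hvabs : |v| ≤ 1 := by
      rw [hv, abs_div, abs_of_pos hs0, div_le_one hs0]
      have : Real.sqrt (t^2) ≤ s := Real.sqrt_le_sqrt (le_trans (le_max_right _ _) hρ)
      rwa [Real.sqrt_sq_eq_abs] at this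
    have key : ρ * (Real.exp v - 1) - t * s - t ^ 2 / 2
        = ρ * (Real.exp v - (1 + v + v ^ 2 / 2)) := by
      have h1 : ρ * v = t * s := by
        rw [hv]; field_simp; rw [← hsq]; ring
      have h2 : ρ * (v ^ 2 / 2) = t ^ 2 / 2 := by
        rw [hv, div_pow, ← hsq]; field_simp
      calc ρ * (Real.exp v - 1) - t * s - t ^ 2 / 2
          = ρ * (Real.exp v - 1) - ρ * v - ρ * (v^2/2) := by rw [h1, h2]
        _ = ρ * (Real.exp v - (1 + v + v ^ 2 / 2)) := by ring
    rw [key]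
    have hb := my_cube hvabs
    calc ‖ρ * (Real.exp v - (1 + v + v ^ 2 / 2))‖
        = ρ * |Real.exp v - (1 + v + v ^ 2 / 2)| := by
          rw [Real.norm_eq_abs, abs_mul, abs_of_pos hρ0]
      _ ≤ ρ * |v| ^ 3 := by exact mul_le_mul_of_nonneg_left hb hρ0.le
      _ = |t| ^ 3 / s := by
          rw [hv, abs_div, abs_of_pos hs0, div_pow, ← hsq]
          field_simp
  · refine Tendsto.div_atTop tendsto_const_nhds ?_
    rw [tendsto_atTop_atTop]
    intro b
    refine ⟨(max b 0) ^ 2, fun a ha => ?_⟩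
    have : Real.sqrt ((max b 0) ^ 2) ≤ Real.sqrt a := Real.sqrt_le_sqrt ha
    rw [Real.sqrt_sq (le_max_right b 0)] at this
    exact le_trans (le_max_left b 0) this

lemma my_transfer {Ω : Type*} [MeasurableSpace Ω] (μ : Measure Ω)
    (X : Ω → ℝ) (Y : Ω → ℕ) (hX : Measurable X) (hYm : Measurable Y) (ρ : ℝ)
    (hc : CondPoisson μ X Y ρ) (ℓ : ℕ) (f : ℝ → ENNReal) (hf : Measurable f) :
    ∫⁻ ω in {ω | Y ω = ℓ}, f (X ω) ∂μ
      = ∫⁻ ω, f (X ω)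
          * ENNReal.ofReal ((ρ * X ω) ^ ℓ * Real.exp (-(ρ * X ω)) / ℓ.factorial) ∂μ := by
  set q : ℝ → ENNReal :=
    fun x => ENNReal.ofReal ((ρ * x) ^ ℓ * Real.exp (-(ρ * x)) / ℓ.factorial) with hq
  have hqm : Measurable q := by
    apply ENNReal.measurable_ofReal.comp
    exact (((measurable_const_mul ρ).pow_const ℓ).mul
      ((measurable_const_mul ρ).neg.exp)).div_const _
  have hYℓ : MeasurableSet {ω | Y ω = ℓ} := hYm (measurableSet_singleton ℓ)
  have hmeq : (μ.restrict {ω | Y ω = ℓ}).map X = (μ.withDensity (fun ω => q (X ω))).map X := by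
    ext A hA
    rw [Measure.map_apply hX hA, Measure.map_apply hX hA,
      Measure.restrict_apply (hX hA), withDensity_apply _ (hX hA)]
    have h := hc ℓ A hA
    have hset : {ω | X ω ∈ A ∧ Y ω = ℓ} = X ⁻¹' A ∩ {ω | Y ω = ℓ} := rfl
    have hset2 : {ω | X ω ∈ A} = X ⁻¹' A := rfl
    rw [hset, hset2] at h
    exact h
  calc ∫⁻ ω in {ω | Y ω = ℓ}, f (X ω) ∂μ
      = ∫⁻ y, f y ∂((μ.restrict {ω | Y ω = ℓ}).map X) :=
        (lintegral_map hf hX).symm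
    _ = ∫⁻ y, f y ∂((μ.withDensity (fun ω => q (X ω))).map X) := by rw [hmeq]
    _ = ∫⁻ ω, f (X ω) ∂(μ.withDensity (fun ω => q (X ω))) := lintegral_map hf hX
    _ = ∫⁻ ω, f (X ω) * q (X ω) ∂μ := by
        have h2 := lintegral_withDensity_eq_lintegral_mul μ (hqm.comp hX) (hf.comp hX)
        simpa [Function.comp_def, mul_comm] using h2

lemma my_key {Ω : Type*} [MeasurableSpace Ω] (μ : Measure Ω) [IsProbabilityMeasure μ]
    (X : Ω → ℝ) (Y : Ω → ℕ) (hX : Measurable X) (hYm : Measurable Y)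
    (hXnn : ∀ ω, 0 ≤ X ω) {ρ : ℝ} (hρ : 0 < ρ) (hc : CondPoisson μ X Y ρ) (t : ℝ) :
    ∫ ω, Real.exp (t * Real.sqrt ρ * ((Y ω : ℝ) / ρ - X ω)) ∂μ
      = ∫ ω, Real.exp ((ρ * (Real.exp (t / Real.sqrt ρ) - 1) - t * Real.sqrt ρ) * X ω) ∂μ := by
  have hs0 : 0 < Real.sqrt ρ := Real.sqrt_pos.2 hρ
  have hsq : Real.sqrt ρ * Real.sqrt ρ = ρ := Real.mul_self_sqrt hρ.le
  set s := Real.sqrt ρ with hsdef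
  set u := t / s with hu
  set a := t * s with ha
  set g := ρ * (Real.exp u - 1) - a with hg
  have hexp : ∀ ω, t * s * ((Y ω : ℝ) / ρ - X ω) = u * (Y ω : ℝ) - a * X ω := by
    intro ω
    rw [hu, ha, ← hsq]
    field_simp
  have hYcast : Measurable fun ω => (Y ω : ℝ) :=
    measurable_from_nat.comp hYm
  -- measurability of the two integrands
  have hm1 : Measurable fun ω => Real.exp (u * (Y ω : ℝ) - a * X ω) :=
    ((hYcast.const_mul u).sub (hX.const_mul a)).exp
  have hm2 : Measurable fun ω => Real.exp (g * X ω) := (hX.const_mul g).exp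
  have hYℓ : ∀ ℓ : ℕ, MeasurableSet {ω | Y ω = ℓ} :=
    fun ℓ => hYm (measurableSet_singleton ℓ)
  -- the lintegral identity
  set F : ℕ → Ω → ENNReal := fun ℓ => Set.indicator {ω | Y ω = ℓ}
    (fun ω => ENNReal.ofReal (Real.exp (u * ℓ) * Real.exp (-(a * X ω)))) with hF
  set G : ℕ → Ω → ENNReal := fun ℓ ω =>
    ENNReal.ofReal (Real.exp (u * ℓ) * Real.exp (-(a * X ω)))
      * ENNReal.ofReal ((ρ * X ω) ^ ℓ * Real.exp (-(ρ * X ω)) / ℓ.factorial) with hG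
  have hFm : ∀ ℓ, Measurable (F ℓ) := fun ℓ =>
    (ENNReal.measurable_ofReal.comp
      (measurable_const.mul (hX.const_mul a).neg.exp)).indicator (hYℓ ℓ)
  have hGm : ∀ ℓ, Measurable (G ℓ) := by
    intro ℓ
    refine Measurable.mul (f := fun ω => ENNReal.ofReal (Real.exp (u * ℓ) * Real.exp (-(a * X ω))))
      (g := fun ω => ENNReal.ofReal ((ρ * X ω) ^ ℓ * Real.exp (-(ρ * X ω)) / ℓ.factorial)) ?_ ?_
    · exact ENNReal.measurable_ofReal.comp (measurable_const.mul (hX.const_mul a).neg.exp)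
    · exact ENNReal.measurable_ofReal.comp
        ((((hX.const_mul ρ).pow_const ℓ).mul ((hX.const_mul ρ).neg.exp)).div_const _)
  have step1 : ∀ ω, ENNReal.ofReal (Real.exp (u * (Y ω : ℝ) - a * X ω)) = ∑' ℓ, F ℓ ω := by
    intro ω
    rw [tsum_eq_single (Y ω) (fun b hb => by
      simp only [hF]
      exact Set.indicator_of_notMem (by simpa using (Ne.symm hb)) _)]
    simp only [hF]
    rw [Set.indicator_of_mem (by simp : ω ∈ {ω' | Y ω' = Y ω})]
    rw [← Real.exp_add]
    ring_nf
  have step6 : ∀ ω, ∑' ℓ, G ℓ ω = ENNReal.ofReal (Real.exp (g * X ω)) := by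
    intro ω
    have hx : 0 ≤ ρ * X ω := mul_nonneg hρ.le (hXnn ω)
    have hGω : ∀ ℓ : ℕ, G ℓ ω = ENNReal.ofReal
        (Real.exp (u * ℓ) * Real.exp (-(a * X ω))
          * ((ρ * X ω) ^ ℓ * Real.exp (-(ρ * X ω)) / ℓ.factorial)) := by
      intro ℓ
      simp only [hG]
      exact (ENNReal.ofReal_mul (by positivity)).symm
    rw [tsum_congr hGω, ← ENNReal.ofReal_tsum_of_nonneg (fun ℓ => by positivity)
      (my_summable u (ρ * X ω) (-(a * X ω))),
      my_tsum u (ρ * X ω) (-(a * X ω))]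
    congr 1
    rw [hg]
    ring
  have hlin : ∫⁻ ω, ENNReal.ofReal (Real.exp (u * (Y ω : ℝ) - a * X ω)) ∂μ
      = ∫⁻ ω, ENNReal.ofReal (Real.exp (g * X ω)) ∂μ := by
    calc ∫⁻ ω, ENNReal.ofReal (Real.exp (u * (Y ω : ℝ) - a * X ω)) ∂μ
        = ∫⁻ ω, ∑' ℓ, F ℓ ω ∂μ := by
          exact lintegral_congr step1
      _ = ∑' ℓ, ∫⁻ ω, F ℓ ω ∂μ := lintegral_tsum fun ℓ => (hFm ℓ).aemeasurable
      _ = ∑' ℓ, ∫⁻ ω, G ℓ ω ∂μ := by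
          refine tsum_congr fun ℓ => ?_
          simp only [hF]
          rw [lintegral_indicator (hYℓ ℓ)]
          exact my_transfer μ X Y hX hYm ρ hc ℓ
            (fun x => ENNReal.ofReal (Real.exp (u * ℓ) * Real.exp (-(a * x))))
            (ENNReal.measurable_ofReal.comp
              (measurable_const.mul ((measurable_const_mul a).neg.exp)))
      _ = ∫⁻ ω, ∑' ℓ, G ℓ ω ∂μ := (lintegral_tsum fun ℓ => (hGm ℓ).aemeasurable).symm
      _ = ∫⁻ ω, ENNReal.ofReal (Real.exp (g * X ω)) ∂μ := lintegral_congr step6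
  calc ∫ ω, Real.exp (t * s * ((Y ω : ℝ) / ρ - X ω)) ∂μ
      = ∫ ω, Real.exp (u * (Y ω : ℝ) - a * X ω) ∂μ := by
        congr 1
        ext ω
        rw [hexp ω]
    _ = (∫⁻ ω, ENNReal.ofReal (Real.exp (u * (Y ω : ℝ) - a * X ω)) ∂μ).toReal :=
        integral_eq_lintegral_of_nonneg_ae (Filter.Eventually.of_forall fun ω => (Real.exp_pos _).le)
          hm1.aestronglyMeasurable
    _ = (∫⁻ ω, ENNReal.ofReal (Real.exp (g * X ω)) ∂μ).toReal := by rw [hlin]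
    _ = ∫ ω, Real.exp (g * X ω) ∂μ :=
        (integral_eq_lintegral_of_nonneg_ae (Filter.Eventually.of_forall fun ω => (Real.exp_pos _).le)
          hm2.aestronglyMeasurable).symm

theorem condPoisson_mgf_convergence
    {Ω : Type*} [MeasurableSpace Ω] (μ : Measure Ω) [IsProbabilityMeasure μ]
    (X : Ω → ℝ) (Y : ℝ → Ω → ℕ)
    (hX : Measurable X) (hY : ∀ ρ, Measurable (Y ρ)) (hXnn : ∀ ω, 0 ≤ X ω)
    (hbdd : ∃ C : ℝ, ∀ ω, X ω ≤ C)
    (hcond : ∀ ρ > (0:ℝ), CondPoisson μ X (Y ρ) ρ) (t : ℝ) :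
    Tendsto
      (fun ρ : ℝ => ∫ ω, Real.exp (t * Real.sqrt ρ * ((Y ρ ω : ℝ) / ρ - X ω)) ∂μ)
      atTop (nhds (∫ ω, Real.exp (t ^ 2 * X ω / 2) ∂μ)) := by
  obtain ⟨C, hC⟩ := hbdd
  set C' : ℝ := max C 0 with hC'
  have hXC : ∀ ω, X ω ≤ C' := fun ω => le_trans (hC ω) (le_max_left _ _)
  set g : ℝ → ℝ := fun ρ => ρ * (Real.exp (t / Real.sqrt ρ) - 1) - t * Real.sqrt ρ with hgdef
  have hglim : Tendsto g atTop (nhds (t ^ 2 / 2)) := my_glim t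
  have hmain : Tendsto (fun ρ : ℝ => ∫ ω, Real.exp (g ρ * X ω) ∂μ) atTop
      (nhds (∫ ω, Real.exp (t ^ 2 * X ω / 2) ∂μ)) := by
    refine tendsto_integral_filter_of_dominated_convergence
      (fun _ => Real.exp ((t ^ 2 / 2 + 1) * C')) ?_ ?_ ?_ ?_
    · exact Filter.Eventually.of_forall fun ρ =>
        ((hX.const_mul (g ρ)).exp).aestronglyMeasurable
    · have hev : ∀ᶠ ρ in atTop, g ρ ≤ t ^ 2 / 2 + 1 :=
        hglim.eventually (eventually_le_nhds (by linarith))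
      filter_upwards [hev] with ρ hρ
      refine Filter.Eventually.of_forall fun ω => ?_
      rw [Real.norm_eq_abs, abs_of_pos (Real.exp_pos _)]
      apply Real.exp_le_exp.2
      calc g ρ * X ω ≤ (t ^ 2 / 2 + 1) * X ω :=
            mul_le_mul_of_nonneg_right hρ (hXnn ω)
        _ ≤ (t ^ 2 / 2 + 1) * C' :=
            mul_le_mul_of_nonneg_left (hXC ω) (by positivity)
    · exact integrable_const _
    · refine Filter.Eventually.of_forall fun ω => ?_
      have h1 : Tendsto (fun ρ => g ρ * X ω) atTop (nhds (t ^ 2 / 2 * X ω)) :=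
        hglim.mul_const _
      have h2 := (Real.continuous_exp.tendsto _).comp h1
      simpa [Function.comp_def, mul_comm, mul_div_assoc, div_mul_eq_mul_div] using h2
  refine hmain.congr' ?_
  filter_upwards [eventually_gt_atTop (0:ℝ)] with ρ hρ
  exact (my_key μ X (Y ρ) hX (hY ρ) hXnn hρ (hcond ρ hρ) t).symm
end
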